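/- arXiv:2012.06742 — 6 statements merged into one kernel-verified Lean document; each statement's English description precedes it below -/
import Mathlib

section
/- Let u : [0,∞) → [0,∞) be concave with u(0) = 0, and fix a constant c ≥ 0. Define f : [0,∞) → ℝ by f(t) = u(t + c)·t/(t + c) for t + c > 0 and f(0) = 0. Then f is concave on [0,∞); and if u is strictly concave, then f is strictly concave on [0,∞). -/
set_option maxHeartbeats 1000000


open Set

/-- Key pointwise inequality used for both the concave and strictly concave parts. -/
theorem shifted_average_concave_aux (u : ℝ → ℝ) (c : ℝ) (hc : 0 ≤ c)
    (hu0 : u 0 = 0)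
    (hu_conc : ConcaveOn ℝ (Ici (0:ℝ)) u)
    (f : ℝ → ℝ) (hf0 : f 0 = 0)
    (hf : ∀ t ∈ Ici (0:ℝ), 0 < t + c → f t = u (t + c) * t / (t + c))
    (x y a b : ℝ) (hx : 0 ≤ x) (hy : 0 ≤ y) (ha : 0 < a) (hb : 0 < b)
    (hab : a + b = 1) :
    a * f x + b * f y ≤ f (a * x + b * y) ∧
      (StrictConcaveOn ℝ (Ici (0:ℝ)) u → x ≠ y →
        a * f x + b * f y < f (a * x + b * y)) := by
  have h0mem : (0:ℝ) ∈ Ici (0:ℝ) := self_mem_Ici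
  -- star-shapedness: s * u t ≤ t * u s for 0 ≤ s ≤ t
  have hstar : ∀ s t : ℝ, 0 ≤ s → s ≤ t → s * u t ≤ t * u s := by
    intro s t hs hst
    rcases eq_or_lt_of_le (hs.trans hst) with h0 | ht
    · have hs0 : s = 0 := le_antisymm (hst.trans h0.symm.le) hs
      simp [hs0, ← h0, hu0]
    · have ha' : (0:ℝ) ≤ s / t := div_nonneg hs ht.le
      have hb' : (0:ℝ) ≤ 1 - s / t := by
        have : s / t ≤ 1 := (div_le_one ht).mpr hst
        linarith
      have hab' : s / t + (1 - s / t) = 1 := by ring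
      have h1 := hu_conc.2 (mem_Ici.mpr ht.le) h0mem ha' hb' hab'
      simp only [smul_eq_mul, mul_zero, add_zero, hu0] at h1
      rw [div_mul_cancel₀ _ (ne_of_gt ht)] at h1
      rw [div_mul_eq_mul_div, div_le_iff₀ ht] at h1
      linarith
  set z := a * x + b * y with hz_def
  have hz0 : 0 ≤ z := by positivity
  have hzmem : z ∈ Ici (0:ℝ) := hz0
  rcases eq_or_lt_of_le (by positivity : (0:ℝ) ≤ z + c) with hZ0 | hZ
  · -- z + c = 0 : forces x = y = 0, c = 0
    have hc0 : c = 0 := by nlinarith [mul_nonneg ha.le hx, mul_nonneg hb.le hy]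
    have hx0 : x = 0 := by nlinarith [mul_nonneg hb.le hy]
    have hy0 : y = 0 := by nlinarith [mul_nonneg ha.le hx]
    constructor
    · simp [hx0, hy0, hz_def, hf0]
    · intro _ hxy; exact absurd (hx0.trans hy0.symm) hxy
  · -- z + c > 0
    have hfz : f z = u (z + c) * z / (z + c) := hf z hzmem hZ
    rcases eq_or_lt_of_le (by positivity : (0:ℝ) ≤ x + c) with hX0 | hX
    · -- x + c = 0 : x = 0 and c = 0
      have hc0 : c = 0 := by linarith
      have hx0 : x = 0 := by linarith
      have hy' : 0 < y := by
        rcases hy.lt_or_eq with h | h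
        · exact h
        · exfalso; rw [hz_def, hx0, hc0, ← h] at hZ; simp at hZ
      have hzby : z = b * y := by rw [hz_def, hx0]; ring
      have hfy : f y = u y := by
        rw [hf y hy (by rw [hc0]; linarith), hc0, add_zero,
          mul_div_assoc, div_self (ne_of_gt hy'), mul_one]
      have hfz' : f z = u (b * y) := by
        rw [hfz, hc0, add_zero, hzby, mul_div_assoc,
          div_self (by positivity), mul_one]
      constructor
      · have h1 := hu_conc.2 (mem_Ici.mpr hy) h0mem hb.le ha.le
          (by linarith : b + a = 1)
        simp only [smul_eq_mul, mul_zero, add_zero, hu0] at h1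
        rw [hx0, hf0, hfy, hfz']
        linarith
      · intro hs _
        have h1 := hs.2 (mem_Ici.mpr hy) h0mem (ne_of_gt hy') hb ha
          (by linarith : b + a = 1)
        simp only [smul_eq_mul, mul_zero, add_zero, hu0] at h1
        rw [hx0, hf0, hfy, hfz']
        linarith
    · rcases eq_or_lt_of_le (by positivity : (0:ℝ) ≤ y + c) with hY0 | hY
      · -- y + c = 0 : y = 0 and c = 0
        have hc0 : c = 0 := by linarith
        have hy0 : y = 0 := by linarith
        have hx' : 0 < x := by rw [hc0] at hX; linarith
        have hzax : z = a * x := by rw [hz_def, hy0]; ring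
        have hfx : f x = u x := by
          rw [hf x hx (by rw [hc0]; linarith), hc0, add_zero,
            mul_div_assoc, div_self (ne_of_gt hx'), mul_one]
        have hfz' : f z = u (a * x) := by
          rw [hfz, hc0, add_zero, hzax, mul_div_assoc,
            div_self (by positivity), mul_one]
        constructor
        · have h1 := hu_conc.2 (mem_Ici.mpr hx) h0mem ha.le hb.le hab
          simp only [smul_eq_mul, mul_zero, add_zero, hu0] at h1
          rw [hy0, hf0, hfx, hfz']
          linarith
        · intro hs _
          have h1 := hs.2 (mem_Ici.mpr hx) h0mem (ne_of_gt hx') ha hb hab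
          simp only [smul_eq_mul, mul_zero, add_zero, hu0] at h1
          rw [hy0, hf0, hfx, hfz']
          linarith
      · -- main case: x + c > 0, y + c > 0, z + c > 0
        have hfx : f x = u (x + c) * x / (x + c) := hf x hx hX
        have hfy : f y = u (y + c) * y / (y + c) := hf y hy hY
        have hZXY : z + c = a * (x + c) + b * (y + c) := by
          rw [hz_def]; nlinarith [hab]
        have hE : 0 ≤ ((y + c) - (x + c)) * ((y + c) * u (x + c) - (x + c) * u (y + c)) := by
          rcases le_total (x + c) (y + c) with h | h
          · have := hstar (x + c) (y + c) hX.le h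
            apply mul_nonneg <;> linarith
          · have h' := hstar (y + c) (x + c) hY.le h
            nlinarith [mul_nonneg (by linarith : (0:ℝ) ≤ (x + c) - (y + c))
              (by linarith : (0:ℝ) ≤ (x + c) * u (y + c) - (y + c) * u (x + c))]
        have hsum : a * (u (x + c) * x / (x + c)) + b * (u (y + c) * y / (y + c))
            = (a * u (x + c) * x * (y + c) + b * u (y + c) * y * (x + c)) / ((x + c) * (y + c)) := by
          field_simp
        have hid : u (z + c) * z * ((x + c) * (y + c))
            - (a * u (x + c) * x * (y + c) + b * u (y + c) * y * (x + c)) * (z + c)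
            = (u (z + c) - a * u (x + c) - b * u (y + c)) * z * ((x + c) * (y + c))
              + c * a * b * (((y + c) - (x + c)) * ((y + c) * u (x + c) - (x + c) * u (y + c))) := by
          have hb1 : b = 1 - a := by linarith
          rw [hz_def, hb1]; ring
        have hT2 : 0 ≤ c * a * b * (((y + c) - (x + c)) * ((y + c) * u (x + c) - (x + c) * u (y + c))) :=
          mul_nonneg (mul_nonneg (mul_nonneg hc ha.le) hb.le) hE
        constructor
        · have hD : a * u (x + c) + b * u (y + c) ≤ u (z + c) := by
            have h1 := hu_conc.2 (mem_Ici.mpr (by linarith : (0:ℝ) ≤ x + c))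
              (mem_Ici.mpr (by linarith : (0:ℝ) ≤ y + c)) ha.le hb.le hab
            simp only [smul_eq_mul] at h1
            rw [← hZXY] at h1; exact h1
          have hT1 : 0 ≤ (u (z + c) - a * u (x + c) - b * u (y + c)) * z * ((x + c) * (y + c)) :=
            mul_nonneg (mul_nonneg (by linarith) hz0) (by positivity)
          rw [hfx, hfy, hfz, hsum, div_le_div_iff₀ (by positivity) hZ]
          linarith [hid, hT1, hT2]
        · intro hs hxy
          have hXY : x + c ≠ y + c := fun h => hxy (by linarith)
          have hD : a * u (x + c) + b * u (y + c) < u (z + c) := by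
            have h1 := hs.2 (mem_Ici.mpr (by linarith : (0:ℝ) ≤ x + c))
              (mem_Ici.mpr (by linarith : (0:ℝ) ≤ y + c)) hXY ha hb hab
            simp only [smul_eq_mul] at h1
            rw [← hZXY] at h1; exact h1
          have hzpos : 0 < z := by
            rw [hz_def]
            rcases hx.lt_or_eq with h | h
            · nlinarith [mul_nonneg hb.le hy]
            · have hy' : 0 < y := hy.lt_of_ne (fun h' => hxy (h.symm.trans h'))
              nlinarith [mul_nonneg ha.le hx]
          have hT1 : 0 < (u (z + c) - a * u (x + c) - b * u (y + c)) * z * ((x + c) * (y + c)) :=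
            mul_pos (mul_pos (by linarith) hzpos) (by positivity)
          rw [hfx, hfy, hfz, hsum, div_lt_div_iff₀ (by positivity) hZ]
          linarith [hid, hT1, hT2]

/-- If `u : [0,∞) → [0,∞)` is concave with `u 0 = 0` and `c ≥ 0`,
then `f(t) = u(t+c)·t/(t+c)` (with `f 0 = 0`) is concave on `[0,∞)`; and if `u`
is strictly concave, then `f` is strictly concave on `[0,∞)`. -/
theorem shifted_average_concave (u : ℝ → ℝ) (c : ℝ) (hc : 0 ≤ c)
    (hu0 : u 0 = 0)
    (hu_nonneg : ∀ t ∈ Ici (0:ℝ), 0 ≤ u t)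
    (hu_conc : ConcaveOn ℝ (Ici (0:ℝ)) u)
    (f : ℝ → ℝ)
    (hf0 : f 0 = 0)
    (hf : ∀ t ∈ Ici (0:ℝ), 0 < t + c → f t = u (t + c) * t / (t + c)) :
    ConcaveOn ℝ (Ici (0:ℝ)) f ∧
      (StrictConcaveOn ℝ (Ici (0:ℝ)) u → StrictConcaveOn ℝ (Ici (0:ℝ)) f) := by
  constructor
  · refine ⟨convex_Ici 0, fun x hx y hy a b ha hb hab => ?_⟩
    simp only [smul_eq_mul]
    rcases eq_or_lt_of_le ha with h0 | ha'
    · have hb1 : b = 1 := by linarith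
      simp [← h0, hb1]
    · rcases eq_or_lt_of_le hb with h0 | hb'
      · have ha1 : a = 1 := by linarith
        simp [← h0, ha1]
      · exact (shifted_average_concave_aux u c hc hu0 hu_conc f hf0 hf
          x y a b hx hy ha' hb' hab).1
  · intro hs
    refine ⟨convex_Ici 0, fun x hx y hy hxy a b ha hb hab => ?_⟩
    simp only [smul_eq_mul]
    exact (shifted_average_concave_aux u c hc hu0 hu_conc f hf0 hf
      x y a b hx hy ha hb hab).2 hs hxy
end

section
/- Under Assumption 1, for every player i and every fixed vector w ∈ (n−1)·Δ of opponents' aggregate allocations, the payoff function v ↦ Σ_x p_x(v_x + w_x)·v_x − c(v) is strictly concave on the simplex Δ. -/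
open Set Finset

/-- Payoff of a player with strategy `v` against opponent aggregate `w`:
`Σ_x p_x(v_x + w_x)·v_x − c(v)`, where `p_x(t) = u_x(t)/t` (and `0/0 = 0` in
Lean, matching the convention that `p_x(t)·v` is read as `0` when `t = 0`). -/
noncomputable def pay {m : ℕ} (u : Fin m → ℝ → ℝ) (c : (Fin m → ℝ) → ℝ)
    (w v : Fin m → ℝ) : ℝ :=
  (∑ x, u x (v x + w x) / (v x + w x) * v x) - c v

/-- A pure-strategy Nash equilibrium of the game `G`: every strategy lies in
the simplex, and each player's strategy maximizes her payoff against the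
aggregate strategy of her opponents. -/
def IsNE {n m : ℕ} (u : Fin m → ℝ → ℝ) (c : (Fin m → ℝ) → ℝ)
    (S : Fin n → Fin m → ℝ) : Prop :=
  (∀ i, S i ∈ stdSimplex ℝ (Fin m)) ∧
  ∀ i, ∀ v ∈ stdSimplex ℝ (Fin m),
    pay u c (fun x => (∑ j, S j x) - S i x) v ≤
      pay u c (fun x => (∑ j, S j x) - S i x) (S i)

/-- Assumption 1: every `u_x` is concave and differentiable on `[0,∞)` with
`u_x(0) = 0` and nonnegative values, `c` is convex and differentiable on the
simplex with nonnegative values, and either all but at most one of the `u_x`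
are strictly concave, or `c` is strictly convex. -/
structure Assumption1 {m : ℕ} (u : Fin m → ℝ → ℝ) (c : (Fin m → ℝ) → ℝ) : Prop where
  u_zero : ∀ x, u x 0 = 0
  u_nonneg : ∀ x, ∀ t ∈ Ici (0:ℝ), 0 ≤ u x t
  u_concave : ∀ x, ConcaveOn ℝ (Ici (0:ℝ)) (u x)
  u_diff : ∀ x, DifferentiableOn ℝ (u x) (Ici (0:ℝ))
  c_nonneg : ∀ v ∈ stdSimplex ℝ (Fin m), 0 ≤ c v
  c_convex : ConvexOn ℝ (stdSimplex ℝ (Fin m)) c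
  c_diff : DifferentiableOn ℝ c (stdSimplex ℝ (Fin m))
  strict : (∃ x₀, ∀ x, x ≠ x₀ → StrictConcaveOn ℝ (Ici (0:ℝ)) (u x)) ∨
    StrictConvexOn ℝ (stdSimplex ℝ (Fin m)) c

/-- The simplex dilated by the factor `r`: `{s : s_x ≥ 0, Σ_x s_x = r}`. -/
def dilSimplex (m : ℕ) (r : ℝ) : Set (Fin m → ℝ) :=
  {s | (∀ x, 0 ≤ s x) ∧ ∑ x, s x = r}

/-- The potential function
`Φ(s) = Σ_x [(1 − 1/n)·∫_0^{s_x} u_x(t)/t dt + (1/n)·u_x(s_x)] − n·c(s/n)`. -/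
noncomputable def potential (n : ℕ) {m : ℕ} (u : Fin m → ℝ → ℝ)
    (c : (Fin m → ℝ) → ℝ) (s : Fin m → ℝ) : ℝ :=
  (∑ x, ((1 - 1/(n:ℝ)) * ∫ t in (0:ℝ)..(s x), u x t / t
    + (1/(n:ℝ)) * u x (s x))) - n * c (fun x => s x / n)

lemma p_antitone {m : ℕ} (u : Fin m → ℝ → ℝ) (x : Fin m)
    (hu0 : u x 0 = 0) (hc : ConcaveOn ℝ (Ici (0:ℝ)) (u x))
    {s s' : ℝ} (hs : 0 < s) (hss : s ≤ s') :
    u x s' / s' ≤ u x s / s := by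
  have hs' : 0 < s' := hs.trans_le hss
  have ha : 0 ≤ s / s' := by positivity
  have hb : 0 ≤ 1 - s / s' := by
    rw [sub_nonneg]
    exact (div_le_one hs').2 hss
  have h := hc.2 (mem_Ici.2 hs'.le) (mem_Ici.2 le_rfl) ha hb (by ring)
  simp only [smul_eq_mul, hu0, mul_zero, add_zero] at h
  rw [div_mul_cancel₀ _ hs'.ne'] at h
  rw [div_le_div_iff₀ hs' hs]
  have h2 : s / s' * u x s' * s' ≤ u x s * s' := mul_le_mul_of_nonneg_right h hs'.le
  have h3 : s / s' * u x s' * s' = u x s' * s := by field_simp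
  linarith

lemma key_le {m : ℕ} (u : Fin m → ℝ → ℝ) (x : Fin m)
    (hu0 : u x 0 = 0) (hc : ConcaveOn ℝ (Ici (0:ℝ)) (u x))
    {w a b l μ : ℝ} (hw : 0 ≤ w) (ha : 0 ≤ a) (hb : 0 ≤ b)
    (hl : 0 < l) (hμ : 0 < μ) (hlμ : l + μ = 1) :
    l * (u x (a + w) / (a + w) * a) + μ * (u x (b + w) / (b + w) * b)
      ≤ u x (l * a + μ * b + w) / (l * a + μ * b + w) * (l * a + μ * b) := by
  rcases eq_or_ne a b with rfl | hab
  · have h1 : l * a + μ * a = a := by linear_combination a * hlμ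
    rw [h1]
    linear_combination (u x (a + w) / (a + w) * a) * hlμ
  · have ht : 0 < l * a + μ * b := by
      rcases ha.lt_or_eq with h | h
      · nlinarith [mul_pos hl h, mul_nonneg hμ.le hb]
      · have hb' : 0 < b := lt_of_le_of_ne hb (fun hb0 => hab (by rw [← h, ← hb0]))
        nlinarith [mul_pos hμ hb', mul_nonneg hl.le ha]
    have hT : 0 < l * a + μ * b + w := by linarith
    have hApos : 0 ≤ a + w := by linarith
    have hBpos : 0 ≤ b + w := by linarith
    have hA : u x (a + w) = u x (a + w) / (a + w) * (a + w) := by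
      rcases hApos.lt_or_eq with h | h
      · rw [div_mul_cancel₀ _ h.ne']
      · rw [← h]; simp [hu0]
    have hB : u x (b + w) = u x (b + w) / (b + w) * (b + w) := by
      rcases hBpos.lt_or_eq with h | h
      · rw [div_mul_cancel₀ _ h.ne']
      · rw [← h]; simp [hu0]
    have harg : l * (a + w) + μ * (b + w) = l * a + μ * b + w := by
      linear_combination w * hlμ
    have hconc := hc.2 (mem_Ici.2 hApos) (mem_Ici.2 hBpos) hl.le hμ.le hlμ
    rw [smul_eq_mul, smul_eq_mul, smul_eq_mul, smul_eq_mul, harg] at hconc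
    rw [hA, hB] at hconc
    have hmono : 0 ≤ w * (b - a) * (u x (a + w) / (a + w) - u x (b + w) / (b + w)) := by
      rcases hw.lt_or_eq with hw' | hw'
      · rcases le_total a b with hab' | hab'
        · have hp := p_antitone u x hu0 hc (show 0 < a + w by linarith)
            (show a + w ≤ b + w by linarith)
          exact mul_nonneg (mul_nonneg hw (by linarith)) (by linarith)
        · have hp := p_antitone u x hu0 hc (show 0 < b + w by linarith)
            (show b + w ≤ a + w by linarith)
          have h4 := mul_nonneg (mul_nonneg hw (show (0:ℝ) ≤ a - b by linarith))
            (show (0:ℝ) ≤ u x (b + w) / (b + w) - u x (a + w) / (a + w) by linarith)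
          nlinarith [h4]
      · rw [← hw']; simp
    have h2 := mul_le_mul_of_nonneg_right hconc ht.le
    have h3 : 0 ≤ l * μ * (w * (b - a) * (u x (a + w) / (a + w) - u x (b + w) / (b + w))) :=
      mul_nonneg (mul_nonneg hl.le hμ.le) hmono
    have hid : (l * (u x (a + w) / (a + w) * (a + w)) + μ * (u x (b + w) / (b + w) * (b + w))) * (l * a + μ * b)
        - (l * (u x (a + w) / (a + w) * a) + μ * (u x (b + w) / (b + w) * b)) * (l * a + μ * b + w)
        = l * μ * (w * (b - a) * (u x (a + w) / (a + w) - u x (b + w) / (b + w))) := by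
      linear_combination (l * (u x (a + w) / (a + w)) * w * a
        + μ * (u x (b + w) / (b + w)) * w * b) * hlμ
    rw [show u x (l * a + μ * b + w) / (l * a + μ * b + w) * (l * a + μ * b)
      = u x (l * a + μ * b + w) * (l * a + μ * b) / (l * a + μ * b + w) from
        div_mul_eq_mul_div _ _ _, le_div_iff₀ hT]
    linarith [h2, h3, hid]

lemma key_lt {m : ℕ} (u : Fin m → ℝ → ℝ) (x : Fin m)
    (hu0 : u x 0 = 0) (hc : StrictConcaveOn ℝ (Ici (0:ℝ)) (u x))
    {w a b l μ : ℝ} (hw : 0 ≤ w) (ha : 0 ≤ a) (hb : 0 ≤ b) (hab : a ≠ b)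
    (hl : 0 < l) (hμ : 0 < μ) (hlμ : l + μ = 1) :
    l * (u x (a + w) / (a + w) * a) + μ * (u x (b + w) / (b + w) * b)
      < u x (l * a + μ * b + w) / (l * a + μ * b + w) * (l * a + μ * b) := by
  have ht : 0 < l * a + μ * b := by
    rcases ha.lt_or_eq with h | h
    · nlinarith [mul_pos hl h, mul_nonneg hμ.le hb]
    · have hb' : 0 < b := lt_of_le_of_ne hb (fun hb0 => hab (by rw [← h, ← hb0]))
      nlinarith [mul_pos hμ hb', mul_nonneg hl.le ha]
  have hT : 0 < l * a + μ * b + w := by linarith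
  have hApos : 0 ≤ a + w := by linarith
  have hBpos : 0 ≤ b + w := by linarith
  have hA : u x (a + w) = u x (a + w) / (a + w) * (a + w) := by
    rcases hApos.lt_or_eq with h | h
    · rw [div_mul_cancel₀ _ h.ne']
    · rw [← h]; simp [hu0]
  have hB : u x (b + w) = u x (b + w) / (b + w) * (b + w) := by
    rcases hBpos.lt_or_eq with h | h
    · rw [div_mul_cancel₀ _ h.ne']
    · rw [← h]; simp [hu0]
  have harg : l * (a + w) + μ * (b + w) = l * a + μ * b + w := by
    linear_combination w * hlμ
  have hABne : a + w ≠ b + w := fun h => hab (by linarith)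
  have hconc := hc.2 (mem_Ici.2 hApos) (mem_Ici.2 hBpos) hABne hl hμ hlμ
  rw [smul_eq_mul, smul_eq_mul, smul_eq_mul, smul_eq_mul, harg] at hconc
  rw [hA, hB] at hconc
  have hmono : 0 ≤ w * (b - a) * (u x (a + w) / (a + w) - u x (b + w) / (b + w)) := by
    rcases hw.lt_or_eq with hw' | hw'
    · rcases le_total a b with hab' | hab'
      · have hp := p_antitone u x hu0 hc.concaveOn (show 0 < a + w by linarith)
          (show a + w ≤ b + w by linarith)
        exact mul_nonneg (mul_nonneg hw (by linarith)) (by linarith)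
      · have hp := p_antitone u x hu0 hc.concaveOn (show 0 < b + w by linarith)
          (show b + w ≤ a + w by linarith)
        have h4 := mul_nonneg (mul_nonneg hw (show (0:ℝ) ≤ a - b by linarith))
          (show (0:ℝ) ≤ u x (b + w) / (b + w) - u x (a + w) / (a + w) by linarith)
        nlinarith [h4]
    · rw [← hw']; simp
  have h2 := mul_lt_mul_of_pos_right hconc ht
  have h3 : 0 ≤ l * μ * (w * (b - a) * (u x (a + w) / (a + w) - u x (b + w) / (b + w))) :=
    mul_nonneg (mul_nonneg hl.le hμ.le) hmono
  have hid : (l * (u x (a + w) / (a + w) * (a + w)) + μ * (u x (b + w) / (b + w) * (b + w))) * (l * a + μ * b)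
      - (l * (u x (a + w) / (a + w) * a) + μ * (u x (b + w) / (b + w) * b)) * (l * a + μ * b + w)
      = l * μ * (w * (b - a) * (u x (a + w) / (a + w) - u x (b + w) / (b + w))) := by
    linear_combination (l * (u x (a + w) / (a + w)) * w * a
      + μ * (u x (b + w) / (b + w)) * w * b) * hlμ
  rw [show u x (l * a + μ * b + w) / (l * a + μ * b + w) * (l * a + μ * b)
    = u x (l * a + μ * b + w) * (l * a + μ * b) / (l * a + μ * b + w) from
      div_mul_eq_mul_div _ _ _, lt_div_iff₀ hT]
  linarith [h2, h3, hid]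

/-- Under Assumption 1, for any fixed opponent aggregate
`w ∈ (n−1)·Δ`, the payoff `v ↦ Σ_x p_x(v_x + w_x)·v_x − c(v)` is strictly
concave on the simplex `Δ`. -/
theorem payoff_strictConcaveOn (n m : ℕ) (hn : 2 ≤ n) (hm : 2 ≤ m)
    (u : Fin m → ℝ → ℝ) (c : (Fin m → ℝ) → ℝ)
    (h1 : Assumption1 u c)
    (w : Fin m → ℝ) (hw : w ∈ dilSimplex m ((n:ℝ) - 1)) :
    StrictConcaveOn ℝ (stdSimplex ℝ (Fin m)) (fun v => pay u c w v) := by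
  obtain ⟨hw0, -⟩ := hw
  refine ⟨convex_stdSimplex ℝ (Fin m), ?_⟩
  intro v hv v' hv' hne l μ hl hμ hlμ
  have hkey : ∀ x : Fin m,
      l * (u x (v x + w x) / (v x + w x) * v x)
        + μ * (u x (v' x + w x) / (v' x + w x) * v' x)
      ≤ u x (l * v x + μ * v' x + w x) / (l * v x + μ * v' x + w x)
          * (l * v x + μ * v' x) :=
    fun x => key_le u x (h1.u_zero x) (h1.u_concave x) (hw0 x) (hv.1 x) (hv'.1 x) hl hμ hlμ
  have hc_le : c (l • v + μ • v') ≤ l * c v + μ * c v' := by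
    have := h1.c_convex.2 hv hv' hl.le hμ.le hlμ
    simpa using this
  have hrw : ∑ x, (l * (u x (v x + w x) / (v x + w x) * v x)
        + μ * (u x (v' x + w x) / (v' x + w x) * v' x))
      = l * ∑ x, u x (v x + w x) / (v x + w x) * v x
        + μ * ∑ x, u x (v' x + w x) / (v' x + w x) * v' x := by
    rw [Finset.sum_add_distrib, Finset.mul_sum, Finset.mul_sum]
  simp only [pay, smul_eq_mul, Pi.add_apply, Pi.smul_apply]
  rcases h1.strict with ⟨x₀, hx₀⟩ | hsc
  · obtain ⟨x₁, hx₁0, hx₁⟩ : ∃ x₁, x₁ ≠ x₀ ∧ v x₁ ≠ v' x₁ := by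
      by_contra h
      push_neg at h
      apply hne
      have hall : ∀ y ∈ univ.erase x₀, v y = v' y := fun y hy => h y (Finset.ne_of_mem_erase hy)
      have e1 := Finset.add_sum_erase univ v (Finset.mem_univ x₀)
      have e2 := Finset.add_sum_erase univ v' (Finset.mem_univ x₀)
      have e3 : ∑ y ∈ univ.erase x₀, v y = ∑ y ∈ univ.erase x₀, v' y :=
        Finset.sum_congr rfl hall
      have e4 := hv.2
      have e5 := hv'.2
      have hsum : v x₀ = v' x₀ := by linarith
      funext y
      rcases eq_or_ne y x₀ with rfl | hy
      · exact hsum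
      · exact h y hy
    have hstrict : l * (u x₁ (v x₁ + w x₁) / (v x₁ + w x₁) * v x₁)
        + μ * (u x₁ (v' x₁ + w x₁) / (v' x₁ + w x₁) * v' x₁)
        < u x₁ (l * v x₁ + μ * v' x₁ + w x₁) / (l * v x₁ + μ * v' x₁ + w x₁)
            * (l * v x₁ + μ * v' x₁) :=
      key_lt u x₁ (h1.u_zero x₁) (hx₀ x₁ hx₁0) (hw0 x₁) (hv.1 x₁) (hv'.1 x₁) hx₁ hl hμ hlμ
    have hS : ∑ x, (l * (u x (v x + w x) / (v x + w x) * v x)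
          + μ * (u x (v' x + w x) / (v' x + w x) * v' x))
        < ∑ x, u x (l * v x + μ * v' x + w x) / (l * v x + μ * v' x + w x)
            * (l * v x + μ * v' x) :=
      Finset.sum_lt_sum (fun x _ => hkey x) ⟨x₁, Finset.mem_univ x₁, hstrict⟩
    rw [hrw] at hS
    linarith
  · have hc_lt : c (l • v + μ • v') < l * c v + μ * c v' := by
      have := hsc.2 hv hv' hne hl hμ hlμ
      simpa using this
    have hS : ∑ x, (l * (u x (v x + w x) / (v x + w x) * v x)
          + μ * (u x (v' x + w x) / (v' x + w x) * v' x))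
        ≤ ∑ x, u x (l * v x + μ * v' x + w x) / (l * v x + μ * v' x + w x)
            * (l * v x + μ * v' x) :=
      Finset.sum_le_sum (fun x _ => hkey x)
    rw [hrw] at hS
    linarith
end

section
/- Under Assumption 1, the game G has a pure-strategy Nash equilibrium. Moreover every Nash equilibrium is strict: at any Nash equilibrium S*, for each player i the strategy s_i* is the unique maximizer over Δ of the payoff v ↦ Σ_x p_x(v_x + s*_{-i,x})·v_x − c(v). -/
open Set Finset

namespace NEAux

noncomputable def ud (f : ℝ → ℝ) (t : ℝ) : ℝ := derivWithin f (Set.Ici 0) t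

noncomputable def qe (f : ℝ → ℝ) : ℝ → ℝ := fun t => if t ≤ 0 then ud f 0 else f t / t

noncomputable def Pe (f : ℝ → ℝ) (s : ℝ) : ℝ := ∫ t in (0:ℝ)..s, qe f t

noncomputable def fA (f : ℝ → ℝ) (w v : ℝ) : ℝ := f (v + w) / (v + w) * v

noncomputable def Fe (n : ℕ) (f : ℝ → ℝ) (s : ℝ) : ℝ :=
  (1 - 1/(n:ℝ)) * Pe f s + (1/(n:ℝ)) * f s

structure Nice (f : ℝ → ℝ) : Prop where
  zero : f 0 = 0
  nonneg : ∀ t ∈ Set.Ici (0:ℝ), 0 ≤ f t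
  conc : ConcaveOn ℝ (Set.Ici 0) f
  diff : DifferentiableOn ℝ f (Set.Ici 0)

lemma Ici_diff_zero : (Set.Ici (0:ℝ) \ {0}) = Set.Ioi 0 := by
  ext t; simp [lt_iff_le_and_ne, eq_comm]

namespace Nice

variable {f : ℝ → ℝ}

lemma cont (h : Nice f) : ContinuousOn f (Set.Ici 0) := h.diff.continuousOn

lemma hasDerivAt' (h : Nice f) {t : ℝ} (ht : 0 < t) : HasDerivAt f (ud f t) t := by
  have h1 : Set.Ici (0:ℝ) ∈ nhds t := Ici_mem_nhds ht
  exact (h.diff t ht.le).hasDerivWithinAt.hasDerivAt h1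

lemma hasDeriv0 (h : Nice f) : HasDerivWithinAt f (ud f 0) (Set.Ici 0) 0 :=
  (h.diff 0 Set.self_mem_Ici).hasDerivWithinAt

lemma tendsto_q0 (h : Nice f) :
    Filter.Tendsto (fun t => f t / t) (nhdsWithin 0 (Set.Ioi 0)) (nhds (ud f 0)) := by
  have h2 := (hasDerivWithinAt_iff_tendsto_slope).mp h.hasDeriv0
  rw [Ici_diff_zero] at h2
  refine h2.congr' ?_
  filter_upwards [self_mem_nhdsWithin] with t (ht : 0 < t)
  rw [slope_def_field, h.zero]; simp

lemma q_cont (h : Nice f) : Continuous (qe f) := by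
  rw [continuous_iff_continuousAt]
  intro t
  rcases lt_trichotomy t 0 with htn | rfl | htp
  · have hev : ∀ᶠ s in nhds t, ud f 0 = qe f s := by
      filter_upwards [Iio_mem_nhds htn] with s (hs : s < 0)
      simp [qe, hs.le]
    exact continuousAt_const.congr hev
  · rw [ContinuousAt, ← nhdsLE_sup_nhdsGT (0:ℝ), Filter.tendsto_sup]
    have hval : qe f 0 = ud f 0 := by simp [qe]
    constructor
    · have hev : ∀ᶠ s in nhdsWithin 0 (Set.Iic (0:ℝ)), ud f 0 = qe f s := by
        filter_upwards [self_mem_nhdsWithin] with s (hs : s ≤ 0); simp [qe, hs]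
      rw [hval]
      exact Filter.Tendsto.congr' (by exact hev) tendsto_const_nhds
    · rw [hval]
      refine h.tendsto_q0.congr' ?_
      filter_upwards [self_mem_nhdsWithin] with s (hs : 0 < s)
      simp [qe, not_le.mpr hs]
  · have hev : ∀ᶠ s in nhds t, f s / s = qe f s := by
      filter_upwards [Ioi_mem_nhds htp] with s (hs : 0 < s)
      simp [qe, not_le.mpr hs]
    have hc : ContinuousAt (fun s => f s / s) t :=
      ((h.hasDerivAt' htp).differentiableAt.continuousAt).div continuousAt_id htp.ne'
    exact hc.congr hev

lemma P_hasDerivAt (h : Nice f) (b : ℝ) : HasDerivAt (Pe f) (qe f b) b := by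
  refine intervalIntegral.integral_hasDerivAt_right
    ((h.q_cont.intervalIntegrable) _ _) ?_ h.q_cont.continuousAt
  exact h.q_cont.stronglyMeasurable.stronglyMeasurableAtFilter

lemma P_cont (h : Nice f) : Continuous (Pe f) :=
  intervalIntegral.continuous_primitive (fun a b => h.q_cont.intervalIntegrable a b) 0

lemma ud_anti (h : Nice f) : AntitoneOn (ud f) (Set.Ici 0) :=
  h.conc.antitoneOn_derivWithin h.diff

lemma tangent (h : Nice f) {a b : ℝ} (ha : 0 ≤ a) (hab : a < b) :
    f b ≤ f a + ud f a * (b - a) := by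
  have hb : b ∈ Set.Ici (0:ℝ) := le_of_lt (lt_of_le_of_lt ha hab)
  have h2 := h.conc.slope_le_derivWithin ha hb hab (h.diff a ha)
  rw [slope_def_field] at h2
  have hba : (0:ℝ) < b - a := by linarith
  rw [div_le_iff₀ hba] at h2
  unfold ud; linarith

lemma ud_le (h : Nice f) {t : ℝ} (ht : 0 < t) : ud f t ≤ f t / t := by
  unfold ud
  have h2 := h.conc.derivWithin_le_slope (self_mem_Ici) (le_of_lt ht) ht (h.diff t ht.le)
  rwa [slope_def_field, h.zero, sub_zero, sub_zero] at h2

lemma ud_lt (h : Nice f) (hs : StrictConcaveOn ℝ (Set.Ici 0) f) {t : ℝ} (ht : 0 < t) :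
    ud f t < f t / t := by
  unfold ud
  have h2 := hs.derivWithin_lt_slope (self_mem_Ici) (le_of_lt ht) ht (h.diff t ht.le)
  rwa [slope_def_field, h.zero, sub_zero, sub_zero] at h2

end Nice

end NEAux

namespace NEAux

noncomputable def fd (f : ℝ → ℝ) (w v : ℝ) : ℝ :=
  (ud f (v + w) * (v + w) - f (v + w)) / (v + w)^2 * v + f (v + w) / (v + w)

namespace Nice

variable {f : ℝ → ℝ}

lemma fA_zero (h0 : f 0 = 0) {v : ℝ} (hv : 0 ≤ v) : fA f 0 v = f v := by
  rcases eq_or_lt_of_le hv with rfl | hv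
  · simp [fA, h0]
  · rw [fA, add_zero, div_mul_cancel₀ _ (ne_of_gt hv)]

lemma fA_hasDerivAt (h : Nice f) {w v : ℝ} (hvw : 0 < v + w) :
    HasDerivAt (fA f w) (fd f w v) v := by
  have h1 : HasDerivAt (fun y : ℝ => y + w) 1 v := (hasDerivAt_id v).add_const w
  have h2 : HasDerivAt (fun y : ℝ => f (y + w)) (ud f (v + w)) v := by
    have := (h.hasDerivAt' hvw).comp v h1; rw [mul_one] at this; exact this
  have h3 := (h2.div h1 (ne_of_gt hvw)).mul (hasDerivAt_id v)
  have hne : (v + w) ≠ 0 := ne_of_gt hvw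
  refine h3.congr_deriv ?_
  rw [fd]
  simp only [id, mul_one, Pi.div_apply]

lemma fd_eq {f : ℝ → ℝ} {w v : ℝ} (hvw : 0 < v + w) :
    fd f w v = (ud f (v + w) * (v + w) * v + f (v + w) * w) / (v + w)^2 := by
  unfold fd
  field_simp
  ring

lemma fd_anti (h : Nice f) {w v1 v2 : ℝ} (hw : 0 < w) (h1 : 0 < v1) (h12 : v1 < v2) :
    fd f w v2 ≤ fd f w v1 := by
  have ht1 : (0:ℝ) < v1 + w := by linarith
  have ht2 : (0:ℝ) < v2 + w := by linarith
  have htt : v1 + w < v2 + w := by linarith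
  have hA : ud f (v2 + w) ≤ ud f (v1 + w) := h.ud_anti (le_of_lt ht1) (le_of_lt ht2) htt.le
  have hB : f (v2 + w) ≤ f (v1 + w) + ud f (v1 + w) * ((v2 + w) - (v1 + w)) :=
    h.tangent ht1.le htt
  have hC : ud f (v1 + w) * (v1 + w) ≤ f (v1 + w) := by
    have := h.ud_le ht1
    rwa [le_div_iff₀ ht1] at this
  rw [fd_eq ht2, fd_eq ht1, div_le_div_iff₀ (pow_pos ht2 2) (pow_pos ht1 2)]
  have H1 : 0 ≤ (ud f (v1 + w) - ud f (v2 + w)) * ((v2 + w) * v2 * (v1 + w)^2) :=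
    mul_nonneg (by linarith) (mul_nonneg (mul_nonneg ht2.le (by linarith)) (sq_nonneg _))
  have H2 : 0 ≤ (f (v1 + w) + ud f (v1 + w) * ((v2 + w) - (v1 + w)) - f (v2 + w)) *
      (w * (v1 + w)^2) := mul_nonneg (by linarith) (mul_nonneg hw.le (sq_nonneg _))
  have H3 : 0 ≤ (f (v1 + w) - ud f (v1 + w) * (v1 + w)) *
      (w * ((v2 + w) - (v1 + w)) * ((v1 + w) + (v2 + w))) :=
    mul_nonneg (by linarith) (mul_nonneg (mul_nonneg hw.le (by linarith)) (by linarith))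
  nlinarith [H1, H2, H3]

lemma fd_strictAnti (h : Nice f) (hs : StrictConcaveOn ℝ (Set.Ici 0) f)
    {w v1 v2 : ℝ} (hw : 0 < w) (h1 : 0 < v1) (h12 : v1 < v2) :
    fd f w v2 < fd f w v1 := by
  have ht1 : (0:ℝ) < v1 + w := by linarith
  have ht2 : (0:ℝ) < v2 + w := by linarith
  have htt : v1 + w < v2 + w := by linarith
  have hA : ud f (v2 + w) ≤ ud f (v1 + w) := h.ud_anti (le_of_lt ht1) (le_of_lt ht2) htt.le
  have hB : f (v2 + w) ≤ f (v1 + w) + ud f (v1 + w) * ((v2 + w) - (v1 + w)) :=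
    h.tangent ht1.le htt
  have hC : ud f (v1 + w) * (v1 + w) < f (v1 + w) := by
    have := h.ud_lt hs ht1
    rwa [lt_div_iff₀ ht1] at this
  rw [fd_eq ht2, fd_eq ht1, div_lt_div_iff₀ (pow_pos ht2 2) (pow_pos ht1 2)]
  have H1 : 0 ≤ (ud f (v1 + w) - ud f (v2 + w)) * ((v2 + w) * v2 * (v1 + w)^2) :=
    mul_nonneg (by linarith) (mul_nonneg (mul_nonneg ht2.le (by linarith)) (sq_nonneg _))
  have H2 : 0 ≤ (f (v1 + w) + ud f (v1 + w) * ((v2 + w) - (v1 + w)) - f (v2 + w)) *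
      (w * (v1 + w)^2) := mul_nonneg (by linarith) (mul_nonneg hw.le (sq_nonneg _))
  have H3 : 0 < (f (v1 + w) - ud f (v1 + w) * (v1 + w)) *
      (w * ((v2 + w) - (v1 + w)) * ((v1 + w) + (v2 + w))) :=
    mul_pos (by linarith) (mul_pos (mul_pos hw (by linarith)) (by linarith))
  nlinarith [H1, H2, H3]

lemma fA_cont (h : Nice f) {w : ℝ} (hw : 0 < w) : ContinuousOn (fA f w) (Set.Ici 0) := by
  have hmap : Set.MapsTo (fun v : ℝ => v + w) (Set.Ici 0) (Set.Ici 0) := by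
    intro v hv; simp only [Set.mem_Ici] at *; linarith
  have c1 : ContinuousOn (fun v : ℝ => f (v + w)) (Set.Ici 0) :=
    h.cont.comp ((continuous_id.add continuous_const).continuousOn) hmap
  have c2 : ContinuousOn (fun v : ℝ => v + w) (Set.Ici 0) :=
    (continuous_id.add continuous_const).continuousOn
  exact (c1.div c2 (fun v hv => by simp only [Set.mem_Ici] at hv; positivity)).mul
    continuousOn_id

lemma fA_concave (h : Nice f) {w : ℝ} (hw : 0 ≤ w) : ConcaveOn ℝ (Set.Ici 0) (fA f w) := by
  rcases eq_or_lt_of_le hw with rfl | hw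
  · refine ⟨convex_Ici 0, fun x hx y hy a b ha hb hab => ?_⟩
    have hxy : a • x + b • y ∈ Set.Ici (0:ℝ) := (convex_Ici 0) hx hy ha hb hab
    rw [fA_zero h.zero hx, fA_zero h.zero hy, fA_zero h.zero hxy]
    exact h.conc.2 hx hy ha hb hab
  · refine AntitoneOn.concaveOn_of_deriv (convex_Ici 0) (h.fA_cont hw) ?_ ?_
    · rw [interior_Ici]
      exact fun v hv =>
        ((h.fA_hasDerivAt (by simp only [Set.mem_Ioi] at hv; linarith)).differentiableAt).differentiableWithinAt
    · rw [interior_Ici]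
      intro v1 h1 v2 h2 h12
      rcases eq_or_lt_of_le h12 with rfl | h12
      · exact le_rfl
      simp only [Set.mem_Ioi] at h1 h2
      rw [(h.fA_hasDerivAt (by linarith : (0:ℝ) < v1 + w)).deriv,
        (h.fA_hasDerivAt (by linarith : (0:ℝ) < v2 + w)).deriv]
      exact h.fd_anti hw h1 h12

lemma fA_strictConcave (h : Nice f) (hs : StrictConcaveOn ℝ (Set.Ici 0) f) {w : ℝ}
    (hw : 0 ≤ w) : StrictConcaveOn ℝ (Set.Ici 0) (fA f w) := by
  rcases eq_or_lt_of_le hw with rfl | hw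
  · refine ⟨convex_Ici 0, fun x hx y hy hne a b ha hb hab => ?_⟩
    have hxy : a • x + b • y ∈ Set.Ici (0:ℝ) := (convex_Ici 0) hx hy ha.le hb.le hab
    rw [fA_zero h.zero hx, fA_zero h.zero hy, fA_zero h.zero hxy]
    exact hs.2 hx hy hne ha hb hab
  · refine StrictAntiOn.strictConcaveOn_of_deriv (convex_Ici 0) (h.fA_cont hw) ?_
    rw [interior_Ici]
    intro v1 h1 v2 h2 h12
    simp only [Set.mem_Ioi] at h1 h2
    rw [(h.fA_hasDerivAt (by linarith : (0:ℝ) < v1 + w)).deriv,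
      (h.fA_hasDerivAt (by linarith : (0:ℝ) < v2 + w)).deriv]
    exact h.fd_strictAnti hs hw h1 h12

end Nice

end NEAux

namespace NEAux
namespace Nice

variable {f : ℝ → ℝ}

lemma qe_pos {f : ℝ → ℝ} {t : ℝ} (ht : 0 < t) : qe f t = f t / t := by
  simp [qe, not_le.mpr ht]

lemma qe_zero (f : ℝ → ℝ) : qe f 0 = ud f 0 := by simp [qe]

/-- The key derivative identity: the per-market payoff term minus `1/n` times the
per-market potential term has vanishing one-sided derivative along the deviation ray. -/
lemma key (h : Nice f) {n : ℕ} (hn : 2 ≤ n) {a b : ℝ} (ha : 0 ≤ a) (hab : 0 ≤ a + b) :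
    HasDerivWithinAt
      (fun l => fA f (((n:ℝ) - 1) * a) (a + l * b) - (1/(n:ℝ)) * Fe n f ((n:ℝ) * (a + l * b)))
      0 (Set.Ici 0) 0 := by
  have hn0 : (0:ℝ) < n := by positivity
  have hn1 : (1:ℝ) ≤ n := by exact_mod_cast Nat.one_le_of_lt hn
  rcases eq_or_ne b 0 with rfl | hb0
  · have : (fun l : ℝ => fA f (((n:ℝ) - 1) * a) (a + l * 0)
        - (1/(n:ℝ)) * Fe n f ((n:ℝ) * (a + l * 0)))
        = fun _ => fA f (((n:ℝ) - 1) * a) a - (1/(n:ℝ)) * Fe n f ((n:ℝ) * a) := by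
      funext l; rw [mul_zero, add_zero]
    rw [this]
    exact hasDerivWithinAt_const _ _ _
  rcases eq_or_lt_of_le ha with rfl | hapos
  · -- boundary case `a = 0`
    have hb : 0 < b := lt_of_le_of_ne (by simpa using hab) (Ne.symm hb0)
    have inner1 : HasDerivWithinAt (fun l : ℝ => l * b) b (Set.Ici 0) 0 :=
      (hasDerivAt_mul_const b).hasDerivWithinAt
    have maps1 : Set.MapsTo (fun l : ℝ => l * b) (Set.Ici 0) (Set.Ici 0) :=
      fun l hl => mul_nonneg hl hb.le
    have inner2 : HasDerivWithinAt (fun l : ℝ => (n:ℝ) * (l * b)) ((n:ℝ) * b) (Set.Ici 0) 0 :=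
      ((hasDerivAt_mul_const b).const_mul (n:ℝ)).hasDerivWithinAt
    have maps2 : Set.MapsTo (fun l : ℝ => (n:ℝ) * (l * b)) (Set.Ici 0) (Set.Ici 0) :=
      fun l hl => mul_nonneg hn0.le (mul_nonneg hl hb.le)
    have A : HasDerivWithinAt (fun l : ℝ => f (l * b)) (ud f 0 * b) (Set.Ici 0) 0 := by
      have h0 : HasDerivWithinAt f (ud f 0) (Set.Ici 0) ((0:ℝ) * b) := by
        rw [zero_mul]; exact h.hasDeriv0
      exact h0.comp 0 inner1 maps1
    have B : HasDerivWithinAt (fun l : ℝ => Pe f ((n:ℝ) * (l * b)))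
        (qe f 0 * ((n:ℝ) * b)) (Set.Ici 0) 0 := by
      have h0 : HasDerivAt (Pe f) (qe f 0) ((n:ℝ) * ((0:ℝ) * b)) := by
        rw [zero_mul, mul_zero]; exact h.P_hasDerivAt 0
      exact h0.comp_hasDerivWithinAt 0 inner2
    have C : HasDerivWithinAt (fun l : ℝ => f ((n:ℝ) * (l * b)))
        (ud f 0 * ((n:ℝ) * b)) (Set.Ici 0) 0 := by
      have h0 : HasDerivWithinAt f (ud f 0) (Set.Ici 0) ((n:ℝ) * ((0:ℝ) * b)) := by
        rw [zero_mul, mul_zero]; exact h.hasDeriv0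
      exact h0.comp 0 inner2 maps2
    have comb : HasDerivWithinAt
        (fun l : ℝ => f (l * b) - (1/(n:ℝ)) *
          ((1 - 1/(n:ℝ)) * Pe f ((n:ℝ) * (l * b)) + (1/(n:ℝ)) * f ((n:ℝ) * (l * b))))
        (ud f 0 * b - (1/(n:ℝ)) *
          ((1 - 1/(n:ℝ)) * (qe f 0 * ((n:ℝ) * b)) + (1/(n:ℝ)) * (ud f 0 * ((n:ℝ) * b))))
        (Set.Ici 0) 0 :=
      A.sub (((B.const_mul _).add (C.const_mul _)).const_mul _)
    have hval : ud f 0 * b - (1/(n:ℝ)) *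
        ((1 - 1/(n:ℝ)) * (qe f 0 * ((n:ℝ) * b)) + (1/(n:ℝ)) * (ud f 0 * ((n:ℝ) * b))) = 0 := by
      rw [qe_zero]
      field_simp
      ring
    rw [hval] at comb
    refine comb.congr ?_ ?_
    · intro l hl
      simp only [mul_zero, zero_add]
      rw [fA_zero h.zero (mul_nonneg hl hb.le), Fe]
    · simp only [mul_zero, zero_mul, zero_add]
      rw [fA_zero h.zero le_rfl, Fe]
  · -- interior case `a > 0`
    have hw : (0:ℝ) ≤ ((n:ℝ) - 1) * a := mul_nonneg (by linarith) hapos.le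
    have hna : (0:ℝ) < (n:ℝ) * a := mul_pos hn0 hapos
    have haw : a + ((n:ℝ) - 1) * a = (n:ℝ) * a := by ring
    have hawpos : (0:ℝ) < a + ((n:ℝ) - 1) * a := by rw [haw]; exact hna
    have inner3 : HasDerivAt (fun l : ℝ => a + l * b) b 0 :=
      (hasDerivAt_mul_const b).const_add a
    have inner4 : HasDerivAt (fun l : ℝ => (n:ℝ) * (a + l * b)) ((n:ℝ) * b) 0 := by
      simpa using inner3.const_mul (n:ℝ)
    have A : HasDerivAt (fun l : ℝ => fA f (((n:ℝ) - 1) * a) (a + l * b))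
        (fd f (((n:ℝ) - 1) * a) a * b) 0 := by
      have h0 : HasDerivAt (fA f (((n:ℝ) - 1) * a)) (fd f (((n:ℝ) - 1) * a) a)
          (a + (0:ℝ) * b) := by
        rw [zero_mul, add_zero]; exact h.fA_hasDerivAt hawpos
      exact h0.comp 0 inner3
    have B : HasDerivAt (fun l : ℝ => Pe f ((n:ℝ) * (a + l * b)))
        (qe f ((n:ℝ) * a) * ((n:ℝ) * b)) 0 := by
      have h0 : HasDerivAt (Pe f) (qe f ((n:ℝ) * a)) ((n:ℝ) * (a + (0:ℝ) * b)) := by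
        rw [zero_mul, add_zero]; exact h.P_hasDerivAt _
      exact h0.comp 0 inner4
    have C : HasDerivAt (fun l : ℝ => f ((n:ℝ) * (a + l * b)))
        (ud f ((n:ℝ) * a) * ((n:ℝ) * b)) 0 := by
      have h0 : HasDerivAt f (ud f ((n:ℝ) * a)) ((n:ℝ) * (a + (0:ℝ) * b)) := by
        rw [zero_mul, add_zero]; exact h.hasDerivAt' hna
      exact h0.comp 0 inner4
    have comb : HasDerivAt
        (fun l : ℝ => fA f (((n:ℝ) - 1) * a) (a + l * b) - (1/(n:ℝ)) *
          ((1 - 1/(n:ℝ)) * Pe f ((n:ℝ) * (a + l * b)) + (1/(n:ℝ)) * f ((n:ℝ) * (a + l * b))))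
        (fd f (((n:ℝ) - 1) * a) a * b - (1/(n:ℝ)) *
          ((1 - 1/(n:ℝ)) * (qe f ((n:ℝ) * a) * ((n:ℝ) * b)) +
            (1/(n:ℝ)) * (ud f ((n:ℝ) * a) * ((n:ℝ) * b)))) 0 :=
      A.sub (((B.const_mul _).add (C.const_mul _)).const_mul _)
    have hval : fd f (((n:ℝ) - 1) * a) a * b - (1/(n:ℝ)) *
        ((1 - 1/(n:ℝ)) * (qe f ((n:ℝ) * a) * ((n:ℝ) * b)) +
          (1/(n:ℝ)) * (ud f ((n:ℝ) * a) * ((n:ℝ) * b))) = 0 := by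
      rw [qe_pos hna, fd, haw]
      field_simp
      ring
    rw [hval] at comb
    exact (comb.hasDerivWithinAt).congr (fun l _ => by rw [Fe]) (by rw [Fe])
end Nice
end NEAux


namespace NEAux

variable {m : ℕ} {u : Fin m → ℝ → ℝ} {c : (Fin m → ℝ) → ℝ}

lemma nice1 (h1 : Assumption1 u c) (x : Fin m) : Nice (u x) :=
  ⟨h1.u_zero x, h1.u_nonneg x, h1.u_concave x, h1.u_diff x⟩

lemma pay_eq (w v : Fin m → ℝ) :
    pay u c w v = (∑ x, fA (u x) (w x) (v x)) - c v := rfl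

lemma coord_concave {g : ℝ → ℝ} (hg : ConcaveOn ℝ (Set.Ici 0) g) (x : Fin m) :
    ConcaveOn ℝ (stdSimplex ℝ (Fin m)) (fun v : Fin m → ℝ => g (v x)) := by
  refine ⟨convex_stdSimplex ℝ (Fin m), fun p hp q hq a b ha hb hab => ?_⟩
  simpa using hg.2 (hp.1 x) (hq.1 x) ha hb hab

lemma concaveOn_sum {ι : Type*} (t : Finset ι) {s : Set (Fin m → ℝ)} (hs : Convex ℝ s)
    {F : ι → (Fin m → ℝ) → ℝ} (hF : ∀ i ∈ t, ConcaveOn ℝ s (F i)) :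
    ConcaveOn ℝ s (fun v => ∑ i ∈ t, F i v) := by
  classical
  induction t using Finset.induction_on with
  | empty => simpa using ⟨hs, by intro p hp q hq a b ha hb hab; simp [hab]⟩
  | insert j t' hnotmem ih =>
    simp only [Finset.sum_insert hnotmem]
    exact (hF j (Finset.mem_insert_self j t')).add
      (ih fun i hi => hF i (Finset.mem_insert_of_mem hi))

lemma pay_concave (h1 : Assumption1 u c) {w : Fin m → ℝ} (hw : ∀ x, 0 ≤ w x) :
    ConcaveOn ℝ (stdSimplex ℝ (Fin m)) (pay u c w) := by
  have hrw : pay u c w = (fun v => ∑ x, fA (u x) (w x) (v x)) - c := rfl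
  rw [hrw]
  refine ConcaveOn.sub ?_ h1.c_convex
  exact concaveOn_sum _ (convex_stdSimplex ℝ (Fin m))
    (fun x _ => coord_concave ((nice1 h1 x).fA_concave (hw x)) x)

lemma exists_two_diff {v v' : Fin m → ℝ} (hv : v ∈ stdSimplex ℝ (Fin m))
    (hv' : v' ∈ stdSimplex ℝ (Fin m)) (hne : v ≠ v') :
    ∃ x1 x2, x1 ≠ x2 ∧ v x1 ≠ v' x1 ∧ v x2 ≠ v' x2 := by
  obtain ⟨x1, hx1⟩ := Function.ne_iff.mp hne
  have : ∃ x2, x2 ≠ x1 ∧ v x2 ≠ v' x2 := by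
    by_contra hc
    push_neg at hc
    have hsum : ∑ x, v x = ∑ x, v' x := hv.2.trans hv'.2.symm
    have he : ∑ x ∈ Finset.univ.erase x1, v x = ∑ x ∈ Finset.univ.erase x1, v' x :=
      Finset.sum_congr rfl (fun x hx => hc x (Finset.ne_of_mem_erase hx))
    have e1 : v x1 + ∑ x ∈ Finset.univ.erase x1, v x = ∑ x, v x :=
      Finset.add_sum_erase _ _ (Finset.mem_univ x1)
    have e2 : v' x1 + ∑ x ∈ Finset.univ.erase x1, v' x = ∑ x, v' x :=
      Finset.add_sum_erase _ _ (Finset.mem_univ x1)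
    exact hx1 (by linarith)
  obtain ⟨x2, hx2, hvx2⟩ := this
  exact ⟨x1, x2, Ne.symm hx2, hx1, hvx2⟩

lemma pay_mid (h1 : Assumption1 u c) {w : Fin m → ℝ} (hw : ∀ x, 0 ≤ w x)
    {v v' : Fin m → ℝ} (hv : v ∈ stdSimplex ℝ (Fin m)) (hv' : v' ∈ stdSimplex ℝ (Fin m))
    (hne : v ≠ v') :
    (1/2 : ℝ) * pay u c w v + (1/2 : ℝ) * pay u c w v' <
      pay u c w ((1/2 : ℝ) • v + (1/2 : ℝ) • v') := by
  have hhalf : (0:ℝ) ≤ 1/2 := by norm_num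
  have hhalfs : (1/2 : ℝ) + 1/2 = 1 := by norm_num
  have hterm : ∀ x : Fin m,
      (1/2 : ℝ) * fA (u x) (w x) (v x) + (1/2 : ℝ) * fA (u x) (w x) (v' x) ≤
        fA (u x) (w x) (((1/2 : ℝ) • v + (1/2 : ℝ) • v') x) := by
    intro x
    have := ((nice1 h1 x).fA_concave (hw x)).2 (hv.1 x) (hv'.1 x) hhalf hhalf hhalfs
    simpa using this
  have hcmid : c ((1/2 : ℝ) • v + (1/2 : ℝ) • v') ≤
      (1/2 : ℝ) * c v + (1/2 : ℝ) * c v' := by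
    simpa using h1.c_convex.2 hv hv' hhalf hhalf hhalfs
  rcases h1.strict with ⟨x₀, hstr⟩ | hcstrict
  · obtain ⟨x1, x2, h12, hd1, hd2⟩ := exists_two_diff hv hv' hne
    have hxs : ∃ x, x ≠ x₀ ∧ v x ≠ v' x := by
      rcases eq_or_ne x1 x₀ with rfl | hne1
      · exact ⟨x2, Ne.symm h12, hd2⟩
      · exact ⟨x1, hne1, hd1⟩
    obtain ⟨xs, hxs0, hxsd⟩ := hxs
    have hstrict : (1/2 : ℝ) * fA (u xs) (w xs) (v xs) + (1/2 : ℝ) * fA (u xs) (w xs) (v' xs) <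
        fA (u xs) (w xs) (((1/2 : ℝ) • v + (1/2 : ℝ) • v') xs) := by
      have := ((nice1 h1 xs).fA_strictConcave (hstr xs hxs0) (hw xs)).2
        (hv.1 xs) (hv'.1 xs) hxsd (by norm_num) (by norm_num) hhalfs
      simpa using this
    have hsum : ∑ x, ((1/2 : ℝ) * fA (u x) (w x) (v x) + (1/2 : ℝ) * fA (u x) (w x) (v' x)) <
        ∑ x, fA (u x) (w x) (((1/2 : ℝ) • v + (1/2 : ℝ) • v') x) :=
      Finset.sum_lt_sum (fun x _ => hterm x) ⟨xs, Finset.mem_univ xs, hstrict⟩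
    rw [pay_eq, pay_eq, pay_eq]
    rw [Finset.sum_add_distrib, ← Finset.mul_sum, ← Finset.mul_sum] at hsum
    linarith
  · have hcstr : c ((1/2 : ℝ) • v + (1/2 : ℝ) • v') <
        (1/2 : ℝ) * c v + (1/2 : ℝ) * c v' := by
      simpa using hcstrict.2 hv hv' hne (by norm_num) (by norm_num) hhalfs
    have hsum : ∑ x, ((1/2 : ℝ) * fA (u x) (w x) (v x) + (1/2 : ℝ) * fA (u x) (w x) (v' x)) ≤
        ∑ x, fA (u x) (w x) (((1/2 : ℝ) • v + (1/2 : ℝ) • v') x) :=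
      Finset.sum_le_sum (fun x _ => hterm x)
    rw [pay_eq, pay_eq, pay_eq]
    rw [Finset.sum_add_distrib, ← Finset.mul_sum, ← Finset.mul_sum] at hsum
    linarith

end NEAux

namespace NEAux

variable {n m : ℕ} {u : Fin m → ℝ → ℝ} {c : (Fin m → ℝ) → ℝ}

lemma w_nonneg {S : Fin n → Fin m → ℝ} (hS : ∀ i, S i ∈ stdSimplex ℝ (Fin m)) (i : Fin n)
    (x : Fin m) : 0 ≤ (∑ j, S j x) - S i x := by
  have e1 : S i x + ∑ j ∈ Finset.univ.erase i, S j x = ∑ j, S j x :=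
    Finset.add_sum_erase _ (fun j => S j x) (Finset.mem_univ i)
  have e2 : 0 ≤ ∑ j ∈ Finset.univ.erase i, S j x :=
    Finset.sum_nonneg (fun j _ => (hS j).1 x)
  linarith

lemma NE_strict (h1 : Assumption1 u c) {S : Fin n → Fin m → ℝ} (hS : IsNE u c S)
    (i : Fin n) {v : Fin m → ℝ} (hv : v ∈ stdSimplex ℝ (Fin m)) (hne : v ≠ S i) :
    pay u c (fun x => (∑ j, S j x) - S i x) v <
      pay u c (fun x => (∑ j, S j x) - S i x) (S i) := by
  set w : Fin m → ℝ := fun x => (∑ j, S j x) - S i x with hwdef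
  have hw : ∀ x, 0 ≤ w x := fun x => w_nonneg hS.1 i x
  have hz : (1/2 : ℝ) • v + (1/2 : ℝ) • (S i) ∈ stdSimplex ℝ (Fin m) :=
    (convex_stdSimplex ℝ (Fin m)) hv (hS.1 i) (by norm_num) (by norm_num) (by norm_num)
  have h2 := pay_mid h1 hw hv (hS.1 i) hne
  have h3 := hS.2 i _ hz
  linarith

end NEAux

namespace NEAux

noncomputable def Gpot (n : ℕ) {m : ℕ} (u : Fin m → ℝ → ℝ) (c : (Fin m → ℝ) → ℝ)
    (σ : Fin m → ℝ) : ℝ :=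
  (∑ x, Fe n (u x) ((n:ℝ) * σ x)) - (n:ℝ) * c σ

variable {n m : ℕ} {u : Fin m → ℝ → ℝ} {c : (Fin m → ℝ) → ℝ}

lemma DD_eq (hn0 : (n:ℝ) ≠ 0) (σ p : Fin m → ℝ) :
    pay u c (fun x => ((n:ℝ)-1) * σ x) p - (1/(n:ℝ)) * Gpot n u c p
      = ∑ x, (fA (u x) (((n:ℝ)-1) * σ x) (p x) - (1/(n:ℝ)) * Fe n (u x) ((n:ℝ) * p x)) := by
  rw [pay_eq, Gpot, Finset.sum_sub_distrib, ← Finset.mul_sum]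
  field_simp
  ring

lemma Gpot_contOn (h1 : Assumption1 u c) (n : ℕ) :
    ContinuousOn (Gpot n u c) (stdSimplex ℝ (Fin m)) := by
  have hterm : ∀ x : Fin m, ContinuousOn
      (fun σ : Fin m → ℝ => Fe n (u x) ((n:ℝ) * σ x)) (stdSimplex ℝ (Fin m)) := by
    intro x
    have hinner : Continuous (fun σ : Fin m → ℝ => (n:ℝ) * σ x) :=
      continuous_const.mul (continuous_apply x)
    have hP : Continuous (fun σ : Fin m → ℝ => Pe (u x) ((n:ℝ) * σ x)) :=
      (nice1 h1 x).P_cont.comp hinner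
    have hu : ContinuousOn (fun σ : Fin m → ℝ => u x ((n:ℝ) * σ x)) (stdSimplex ℝ (Fin m)) :=
      (nice1 h1 x).cont.comp hinner.continuousOn
        (fun σ hσ => mul_nonneg (by positivity) (hσ.1 x))
    exact (continuousOn_const.mul hP.continuousOn).add (continuousOn_const.mul hu)
  exact (continuousOn_finset_sum _ (fun x _ => hterm x)).sub
    (continuousOn_const.mul h1.c_diff.continuousOn)

lemma exists_NE (h1 : Assumption1 u c) (hn : 2 ≤ n) (hm : 2 ≤ m) :
    ∃ S : Fin n → Fin m → ℝ, IsNE u c S := by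
  classical
  have hnn : 0 < n := by omega
  have hn0 : (0:ℝ) < n := by exact_mod_cast hnn
  have hn0' : (n:ℝ) ≠ 0 := ne_of_gt hn0
  have hn1 : (1:ℝ) ≤ n := by exact_mod_cast hnn
  have hne : (stdSimplex ℝ (Fin m)).Nonempty :=
    ⟨Pi.single (⟨0, by omega⟩ : Fin m) 1, single_mem_stdSimplex ℝ _⟩
  obtain ⟨σ, hσmem, hσmax⟩ :=
    (isCompact_stdSimplex ℝ (Fin m)).exists_isMaxOn hne (Gpot_contOn h1 n)
  have hσmax' : ∀ p ∈ stdSimplex ℝ (Fin m), Gpot n u c p ≤ Gpot n u c σ :=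
    isMaxOn_iff.mp hσmax
  refine ⟨fun _ => σ, fun i => hσmem, ?_⟩
  intro i v hv
  show pay u c (fun x => (∑ _j : Fin n, σ x) - σ x) v ≤
    pay u c (fun x => (∑ _j : Fin n, σ x) - σ x) σ
  have hwfun : (fun x => (∑ _j : Fin n, σ x) - σ x) = fun x => ((n:ℝ) - 1) * σ x := by
    funext x
    rw [Finset.sum_const, Finset.card_univ, Fintype.card_fin, nsmul_eq_mul]
    ring
  rw [hwfun]
  set W : Fin m → ℝ := fun x => ((n:ℝ) - 1) * σ x with hWdef
  have hW : ∀ x, 0 ≤ W x := fun x => mul_nonneg (by linarith) (hσmem.1 x)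
  set pt : ℝ → Fin m → ℝ := fun l x => σ x + l * (v x - σ x) with hptdef
  have hpt : ∀ l ∈ Icc (0:ℝ) 1, pt l ∈ stdSimplex ℝ (Fin m) := by
    intro l hl
    constructor
    · intro x
      show 0 ≤ σ x + l * (v x - σ x)
      have h1' := hσmem.1 x
      have h2' := hv.1 x
      nlinarith [mul_nonneg hl.1 (hv.1 x), mul_nonneg (sub_nonneg.mpr hl.2) (hσmem.1 x)]
    · show ∑ x, (σ x + l * (v x - σ x)) = 1
      rw [Finset.sum_add_distrib, ← Finset.mul_sum, Finset.sum_sub_distrib,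
        hσmem.2, hv.2]
      ring
  have hpt1 : pt 1 = v := funext fun x => by simp [hptdef]
  have hpt0 : pt 0 = σ := funext fun x => by simp [hptdef]
  set hh : ℝ → ℝ := fun l => pay u c W (pt l) with hhdef
  set hG : ℝ → ℝ := fun l => Gpot n u c (pt l) with hGdef
  set SF : ℝ → ℝ := fun l => ∑ x,
    (fA (u x) (((n:ℝ) - 1) * σ x) (σ x + l * (v x - σ x))
      - (1/(n:ℝ)) * Fe n (u x) ((n:ℝ) * (σ x + l * (v x - σ x)))) with hSFdef
  have hhconc : ConcaveOn ℝ (Icc (0:ℝ) 1) hh := by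
    refine ⟨convex_Icc 0 1, fun l1 hl1 l2 hl2 a b ha hb hab => ?_⟩
    have hc1 : pt (a * l1 + b * l2) = a • pt l1 + b • pt l2 := by
      funext x
      simp only [hptdef, Pi.add_apply, Pi.smul_apply, smul_eq_mul]
      linear_combination (-(σ x)) * hab
    have h2 := (pay_concave h1 hW).2 (hpt l1 hl1) (hpt l2 hl2) ha hb hab
    rw [← hc1] at h2
    exact h2
  have hSF : HasDerivWithinAt SF 0 (Set.Ici 0) 0 := by
    have h0 : HasDerivWithinAt SF (∑ _x : Fin m, (0:ℝ)) (Set.Ici 0) 0 :=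
      HasDerivWithinAt.fun_sum (fun x _ => Nice.key (nice1 h1 x) hn (hσmem.1 x)
        (show 0 ≤ σ x + (v x - σ x) by have := hv.1 x; linarith))
    simpa using h0
  have T : Filter.Tendsto (slope SF 0) (nhdsWithin 0 (Set.Ioi 0)) (nhds 0) := by
    have h' := hSF
    rw [hasDerivWithinAt_iff_tendsto_slope] at h'
    rwa [Ici_diff_zero] at h'
  have bound : ∀ᶠ l in nhdsWithin 0 (Set.Ioi 0),
      pay u c W v - pay u c W σ ≤ slope SF 0 l := by
    filter_upwards [Ioc_mem_nhdsGT_of_mem (by norm_num : (0:ℝ) ∈ Ico (0:ℝ) 1)] with l hl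
    have hl0 : 0 < l := hl.1
    have hl1 : l ≤ 1 := hl.2
    have hlI : l ∈ Icc (0:ℝ) 1 := ⟨hl0.le, hl1⟩
    have a1 : hh l - (1/(n:ℝ)) * hG l = SF l := DD_eq hn0' σ (pt l)
    have a0 : hh 0 - (1/(n:ℝ)) * hG 0 = SF 0 := DD_eq hn0' σ (pt 0)
    have hGle : hG l ≤ hG 0 := by
      have h2 := hσmax' (pt l) (hpt l hlI)
      have h3 : hG 0 = Gpot n u c σ := congrArg (Gpot n u c) hpt0
      have h4 : hG l = Gpot n u c (pt l) := rfl
      linarith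
    have hsl : slope hh 0 1 ≤ slope hh 0 l :=
      hhconc.slope_anti (by constructor <;> norm_num)
        ⟨hlI, by simp [hl0.ne']⟩ ⟨by constructor <;> norm_num, by norm_num⟩ hl1
    rw [slope_def_field, slope_def_field] at hsl
    have h1v : hh 1 = pay u c W v := congrArg (pay u c W) hpt1
    have h0σ : hh 0 = pay u c W σ := congrArg (pay u c W) hpt0
    have hnp : (1/(n:ℝ)) * (hG l - hG 0) ≤ 0 :=
      mul_nonpos_of_nonneg_of_nonpos (by positivity) (by linarith)
    have hnum : hh l - hh 0 ≤ SF l - SF 0 := by linarith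
    rw [slope_def_field, sub_zero]
    have hdiv : (hh l - hh 0) / l ≤ (SF l - SF 0) / l :=
      div_le_div_of_nonneg_right ?x1 hl0.le
    case x1 => exact hnum
    have hstart : pay u c W v - pay u c W σ ≤ (hh l - hh 0) / l := by
      rw [← h1v, ← h0σ]
      have : (hh 1 - hh 0) / (1 - 0) = hh 1 - hh 0 := by norm_num
      rw [this, sub_zero] at hsl
      linarith
    linarith
  have hfin : pay u c W v - pay u c W σ ≤ 0 := ge_of_tendsto T bound
  linarith

end NEAux

/-- Under Assumption 1 the game `G` has a pure-strategy Nash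
equilibrium, and every Nash equilibrium is strict: each `s_i*` is the unique
maximizer of player `i`'s payoff against the equilibrium opponent aggregate. -/
theorem NE_exists_and_strict (n m : ℕ) (hn : 2 ≤ n) (hm : 2 ≤ m)
    (u : Fin m → ℝ → ℝ) (c : (Fin m → ℝ) → ℝ)
    (h1 : Assumption1 u c) :
    (∃ S : Fin n → Fin m → ℝ, IsNE u c S) ∧
    ∀ S : Fin n → Fin m → ℝ, IsNE u c S →
      ∀ i, ∀ v ∈ stdSimplex ℝ (Fin m), v ≠ S i →
        pay u c (fun x => (∑ j, S j x) - S i x) v <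
          pay u c (fun x => (∑ j, S j x) - S i x) (S i) := by
  refine ⟨NEAux.exists_NE h1 hn hm, ?_⟩
  intro S hS i v hv hne
  exact NEAux.NE_strict h1 hS i hv hne
end

section
/- Under Assumption 1, every pure-strategy Nash equilibrium of the game G is symmetric: if S* = (s_1*, …, s_n*) is a Nash equilibrium, then s_i* = s_j* for all players i and j. -/
open Set Finset

section Aux
open Filter Topology

lemma slopeLimit {f : ℝ → ℝ} {q B t : ℝ} (ht : 0 < t)
    (hf : HasDerivWithinAt f q (Set.Icc 0 1) 0)
    (hs : ∀ l ∈ Set.Ioc (0:ℝ) t, (f l - f 0) / l ≤ B) : q ≤ B := by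
  have h0 : (Set.Icc (0:ℝ) 1 : Set ℝ) \ {0} = Set.Ioc 0 1 := by
    ext x
    simp only [Set.mem_diff, Set.mem_Icc, Set.mem_singleton_iff, Set.mem_Ioc]
    constructor
    · rintro ⟨⟨h1, h2⟩, h3⟩; exact ⟨lt_of_le_of_ne h1 (Ne.symm h3), h2⟩
    · rintro ⟨h1, h2⟩; exact ⟨⟨le_of_lt h1, h2⟩, ne_of_gt h1⟩
  have htend : Tendsto (slope f 0) (𝓝[Set.Ioc (0:ℝ) 1] 0) (𝓝 q) := by
    have := hasDerivWithinAt_iff_tendsto_slope.1 hf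
    rwa [h0] at this
  rw [nhdsWithin_Ioc_eq_nhdsGT one_pos] at htend
  refine le_of_tendsto htend ?_
  filter_upwards [Ioc_mem_nhdsGT ht] with l hl
  rw [slope_def_field]
  have := hs l hl
  simpa using this

lemma concaveDerivLeSlope {f : ℝ → ℝ} {κ a s : ℝ}
    (hc : ConcaveOn ℝ (Set.Ici 0) f) (ha : 0 ≤ a) (has : a < s)
    (hd : HasDerivAt f κ s) : κ ≤ (f s - f a) / (s - a) := by
  have hspos : (0:ℝ) < s := lt_of_le_of_lt ha has
  have htend : Tendsto (slope f s) (𝓝[<] s) (𝓝 κ) :=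
    (hasDerivAt_iff_tendsto_slope.1 hd).mono_left
      (nhdsWithin_mono _ (fun y hy => ne_of_lt hy))
  refine le_of_tendsto htend ?_
  filter_upwards [Ioo_mem_nhdsLT_of_mem (Set.mem_Ioc.2 ⟨has, le_refl s⟩)] with l hl
  obtain ⟨hal, hls⟩ := hl
  rw [slope_def_field]
  have hsa : (0:ℝ) < s - a := by linarith
  have hsl : (0:ℝ) < s - l := by linarith
  have hsa' : s - a ≠ 0 := ne_of_gt hsa
  have hθ0 : 0 ≤ (s - l)/(s - a) := le_of_lt (div_pos hsl hsa)
  have hθ1 : 0 ≤ (l - a)/(s - a) := le_of_lt (div_pos (by linarith) hsa)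
  have hcomb : (s - l)/(s - a) + (l - a)/(s - a) = 1 := by field_simp; ring
  have hkey := hc.2 (Set.mem_Ici.2 ha) (Set.mem_Ici.2 (le_of_lt hspos)) hθ0 hθ1 hcomb
  simp only [smul_eq_mul] at hkey
  rw [show (s - l)/(s - a) * a + (l - a)/(s - a) * s = l by field_simp; ring] at hkey
  have hkey2 : (s - l) * f a + (l - a) * f s ≤ f l * (s - a) := by
    rw [div_mul_eq_mul_div, div_mul_eq_mul_div, ← add_div, div_le_iff₀ hsa] at hkey
    linarith
  rw [show (f l - f s)/(l - s) = (f s - f l)/(s - l)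
      by rw [div_eq_div_iff (show l - s ≠ 0 by linarith) (ne_of_gt hsl)]; ring,
    div_le_div_iff₀ hsl hsa]
  nlinarith

noncomputable def Gderiv {m : ℕ} (u : Fin m → ℝ → ℝ) (p w e : Fin m → ℝ) (x : Fin m) : ℝ :=
  if p x + w x = 0 then 0 else
    (deriv (u x) (p x + w x) * e x * (p x + w x) - u x (p x + w x) * e x) / (p x + w x)^2 * p x
      + u x (p x + w x) / (p x + w x) * e x

lemma seg_mem_simplex {m : ℕ} {p q : Fin m → ℝ} (hp : p ∈ stdSimplex ℝ (Fin m))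
    (hq : q ∈ stdSimplex ℝ (Fin m)) {l : ℝ} (hl : l ∈ Set.Icc (0:ℝ) 1) :
    (fun x => p x + l * (q x - p x)) ∈ stdSimplex ℝ (Fin m) := by
  have h := (convex_stdSimplex ℝ (Fin m)) hp hq (by linarith [hl.1, hl.2] : (0:ℝ) ≤ 1 - l)
    hl.1 (by ring)
  convert h using 1
  funext x
  simp only [Pi.add_apply, Pi.smul_apply, smul_eq_mul]
  ring

lemma cost_hasDeriv {m : ℕ} {c : (Fin m → ℝ) → ℝ}
    (hdiff : DifferentiableOn ℝ c (stdSimplex ℝ (Fin m)))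
    {p q : Fin m → ℝ} (hp : p ∈ stdSimplex ℝ (Fin m)) (hq : q ∈ stdSimplex ℝ (Fin m)) :
    HasDerivWithinAt (fun l => c (fun x => p x + l * (q x - p x)))
      (fderivWithin ℝ c (stdSimplex ℝ (Fin m)) p (fun x => q x - p x)) (Set.Icc 0 1) 0 := by
  have hγ : HasDerivWithinAt (fun l : ℝ => (fun x => p x + l * (q x - p x)))
      (fun x => q x - p x) (Set.Icc 0 1) 0 := by
    refine (hasDerivAt_pi.2 fun x => ?_).hasDerivWithinAt
    simpa using ((hasDerivAt_id (0:ℝ)).mul_const (q x - p x)).const_add (p x)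
  have hmaps : Set.MapsTo (fun l : ℝ => (fun x => p x + l * (q x - p x)))
      (Set.Icc 0 1) (stdSimplex ℝ (Fin m)) := fun l hl => seg_mem_simplex hp hq hl
  have hc := (hdiff p hp).hasFDerivWithinAt
  have := hc.comp_hasDerivWithinAt_of_eq 0 hγ hmaps (by funext x; simp)
  exact this

lemma term_hasDeriv {m : ℕ} (u : Fin m → ℝ → ℝ)
    (hu_zero : ∀ x, u x 0 = 0)
    (hu_diff : ∀ x, DifferentiableOn ℝ (u x) (Set.Ici (0:ℝ)))
    (p w q : Fin m → ℝ) (hp0 : ∀ x, 0 ≤ p x) (hw : ∀ x, 0 ≤ w x)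
    (hz : ∀ x, p x + w x = 0 → q x - p x = 0) (x : Fin m) :
    HasDerivWithinAt
      (fun l => u x (p x + l * (q x - p x) + w x) / (p x + l * (q x - p x) + w x)
        * (p x + l * (q x - p x)))
      (Gderiv u p w (fun y => q y - p y) x) (Set.Icc 0 1) 0 := by
  have hfun : (fun l => u x (p x + l * (q x - p x) + w x) / (p x + l * (q x - p x) + w x)
        * (p x + l * (q x - p x)))
      = (fun l => u x ((p x + w x) + l * (q x - p x)) / ((p x + w x) + l * (q x - p x))
        * (p x + l * (q x - p x))) := by
    funext l
    rw [show p x + l * (q x - p x) + w x = (p x + w x) + l * (q x - p x) from by ring]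
  rw [hfun]
  by_cases ht : p x + w x = 0
  · have he : q x - p x = 0 := hz x ht
    have hpx : p x = 0 := by have := hp0 x; have := hw x; linarith
    have hfun2 : (fun l => u x ((p x + w x) + l * (q x - p x)) / ((p x + w x) + l * (q x - p x))
        * (p x + l * (q x - p x))) = fun _ : ℝ => (0:ℝ) := by
      funext l
      rw [ht, he, hpx]
      simp [hu_zero x]
    rw [hfun2]
    simp only [Gderiv, if_pos ht]
    exact (hasDerivWithinAt_const 0 _ 0)
  · have htpos : 0 < p x + w x := lt_of_le_of_ne (by have := hp0 x; have := hw x; linarith)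
      (Ne.symm ht)
    have hu : HasDerivAt (u x) (deriv (u x) (p x + w x)) (p x + w x) :=
      ((hu_diff x (p x + w x) (Set.mem_Ici.2 (le_of_lt htpos))).differentiableAt
        (Ici_mem_nhds htpos)).hasDerivAt
    have ha : HasDerivAt (fun l : ℝ => (p x + w x) + l * (q x - p x)) (q x - p x) 0 := by
      simpa using ((hasDerivAt_id (0:ℝ)).mul_const (q x - p x)).const_add (p x + w x)
    have hu' : HasDerivAt (u x) (deriv (u x) (p x + w x))
        ((fun l : ℝ => (p x + w x) + l * (q x - p x)) 0) := by
      simpa using hu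
    have hcomp := hu'.comp 0 ha
    have hne : (fun l : ℝ => (p x + w x) + l * (q x - p x)) 0 ≠ 0 := by simpa using ht
    have hdiv := hcomp.div ha hne
    have hb : HasDerivAt (fun l : ℝ => p x + l * (q x - p x)) (q x - p x) 0 := by
      simpa using ((hasDerivAt_id (0:ℝ)).mul_const (q x - p x)).const_add (p x)
    have hmul := hdiv.mul hb
    refine (HasDerivAt.hasDerivWithinAt ?_)
    convert hmul using 1
    rfl
    rfl
    simp only [Gderiv, if_neg ht, Function.comp]
    norm_num

lemma pay_hasDeriv {m : ℕ} (u : Fin m → ℝ → ℝ) (c : (Fin m → ℝ) → ℝ)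
    (hu_zero : ∀ x, u x 0 = 0)
    (hu_diff : ∀ x, DifferentiableOn ℝ (u x) (Set.Ici (0:ℝ)))
    (hc_diff : DifferentiableOn ℝ c (stdSimplex ℝ (Fin m)))
    (p w q : Fin m → ℝ) (hp : p ∈ stdSimplex ℝ (Fin m)) (hq : q ∈ stdSimplex ℝ (Fin m))
    (hw : ∀ x, 0 ≤ w x)
    (hz : ∀ x, p x + w x = 0 → q x - p x = 0) :
    HasDerivWithinAt (fun l => pay u c w (fun x => p x + l * (q x - p x)))
      ((∑ x, Gderiv u p w (fun y => q y - p y) x)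
        - fderivWithin ℝ c (stdSimplex ℝ (Fin m)) p (fun y => q y - p y))
      (Set.Icc 0 1) 0 := by
  simp only [pay]
  exact (HasDerivWithinAt.fun_sum fun x _ =>
      term_hasDeriv u hu_zero hu_diff p w q hp.1 hw hz x).sub
    (cost_hasDeriv hc_diff hp hq)

end Aux

/-- Under Assumption 1, every pure-strategy Nash equilibrium of
the game `G` is symmetric: all players play the same strategy. -/
theorem NE_symmetric (n m : ℕ) (hn : 2 ≤ n) (hm : 2 ≤ m)
    (u : Fin m → ℝ → ℝ) (c : (Fin m → ℝ) → ℝ)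
    (h1 : Assumption1 u c)
    (S : Fin n → Fin m → ℝ) (hS : IsNE u c S) :
    ∀ i j, S i = S j := by
  obtain ⟨hmem, hopt⟩ := hS
  intro i j
  by_contra hne
  have hSnn : ∀ k x, 0 ≤ S k x := fun k x => (hmem k).1 x
  have hsum1 : ∀ k, ∑ x, S k x = 1 := fun k => (hmem k).2
  have hsle : ∀ (k : Fin n) x, S k x ≤ ∑ k', S k' x := fun k x =>
    Finset.single_le_sum (f := fun k' => S k' x) (fun k' _ => hSnn k' x) (Finset.mem_univ k)
  have hsnn : ∀ x, 0 ≤ ∑ k, S k x := fun x =>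
    Finset.sum_nonneg fun k _ => hSnn k x
  have hs0 : ∀ x, (∑ k, S k x) = 0 → ∀ k, S k x = 0 := fun x hx k =>
    le_antisymm (hx ▸ hsle k x) (hSnn k x)
  -- derivatives of u at the aggregate
  have hDu : ∀ x, (∑ k, S k x) ≠ 0 →
      HasDerivAt (u x) (deriv (u x) (∑ k, S k x)) (∑ k, S k x) := by
    intro x hx
    have hpos : 0 < ∑ k, S k x := lt_of_le_of_ne (hsnn x) (Ne.symm hx)
    exact ((h1.u_diff x (∑ k, S k x) (Set.mem_Ici.2 (le_of_lt hpos))).differentiableAt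
      (Ici_mem_nhds hpos)).hasDerivAt
  -- player i, deviation towards S j
  have hwi : ∀ x, 0 ≤ (∑ k, S k x) - S i x := fun x => sub_nonneg.2 (hsle i x)
  have hwj : ∀ x, 0 ≤ (∑ k, S k x) - S j x := fun x => sub_nonneg.2 (hsle j x)
  have hzi : ∀ x, S i x + ((∑ k, S k x) - S i x) = 0 → S j x - S i x = 0 := by
    intro x hx
    have hx0 : (∑ k, S k x) = 0 := by linarith
    rw [hs0 x hx0 i, hs0 x hx0 j]; ring
  have hzj : ∀ x, S j x + ((∑ k, S k x) - S j x) = 0 → S i x - S j x = 0 := by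
    intro x hx
    have hx0 : (∑ k, S k x) = 0 := by linarith
    rw [hs0 x hx0 i, hs0 x hx0 j]; ring
  have Hi := pay_hasDeriv u c h1.u_zero h1.u_diff h1.c_diff
    (S i) (fun x => (∑ k, S k x) - S i x) (S j) (hmem i) (hmem j) hwi hzi
  have Hj := pay_hasDeriv u c h1.u_zero h1.u_diff h1.c_diff
    (S j) (fun x => (∑ k, S k x) - S j x) (S i) (hmem j) (hmem i) hwj hzj
  -- NE first-order inequalities
  have hγi0 : (fun x => S i x + (0:ℝ) * (S j x - S i x)) = S i := by funext x; ring
  have hγj0 : (fun x => S j x + (0:ℝ) * (S i x - S j x)) = S j := by funext x; ring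
  have hNEi : (∑ x, Gderiv u (S i) (fun x => (∑ k, S k x) - S i x)
        (fun y => S j y - S i y) x)
      - fderivWithin ℝ c (stdSimplex ℝ (Fin m)) (S i) (fun y => S j y - S i y) ≤ 0 := by
    refine slopeLimit one_pos Hi ?_
    intro l hl
    apply div_nonpos_of_nonpos_of_nonneg _ (le_of_lt hl.1)
    have h2 := hopt i (fun x => S i x + l * (S j x - S i x))
      (seg_mem_simplex (hmem i) (hmem j) ⟨le_of_lt hl.1, hl.2⟩)
    rw [hγi0]
    linarith [h2]
  have hNEj : (∑ x, Gderiv u (S j) (fun x => (∑ k, S k x) - S j x)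
        (fun y => S i y - S j y) x)
      - fderivWithin ℝ c (stdSimplex ℝ (Fin m)) (S j) (fun y => S i y - S j y) ≤ 0 := by
    refine slopeLimit one_pos Hj ?_
    intro l hl
    apply div_nonpos_of_nonpos_of_nonneg _ (le_of_lt hl.1)
    have h2 := hopt j (fun x => S j x + l * (S i x - S j x))
      (seg_mem_simplex (hmem j) (hmem i) ⟨le_of_lt hl.1, hl.2⟩)
    rw [hγj0]
    linarith [h2]
  -- midpoint
  set mid : Fin m → ℝ := fun x => S i x + (1/2 : ℝ) * (S j x - S i x) with hmid_def
  have hmidmem : mid ∈ stdSimplex ℝ (Fin m) :=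
    seg_mem_simplex (hmem i) (hmem j) (by norm_num)
  -- cost derivative bounds
  have hLi : fderivWithin ℝ c (stdSimplex ℝ (Fin m)) (S i) (fun y => S j y - S i y)
      ≤ 2 * (c mid - c (S i)) := by
    refine slopeLimit (by norm_num : (0:ℝ) < 1/2)
      (cost_hasDeriv h1.c_diff (hmem i) (hmem j)) ?_
    intro l hl
    have hl0 := hl.1
    have hl2 := hl.2
    have hcomb := h1.c_convex.2 (hmem i) hmidmem
      (by linarith : (0:ℝ) ≤ 1 - 2*l) (by linarith : (0:ℝ) ≤ 2*l) (by ring)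
    have hpt : ((1 - 2*l) • S i + (2*l) • mid) = fun x => S i x + l * (S j x - S i x) := by
      funext x
      simp only [Pi.add_apply, Pi.smul_apply, smul_eq_mul, hmid_def]
      ring
    rw [hpt] at hcomb
    simp only [smul_eq_mul] at hcomb
    rw [hγi0, div_le_iff₀ hl0]
    linarith
  have hLj : fderivWithin ℝ c (stdSimplex ℝ (Fin m)) (S j) (fun y => S i y - S j y)
      ≤ 2 * (c mid - c (S j)) := by
    refine slopeLimit (by norm_num : (0:ℝ) < 1/2)
      (cost_hasDeriv h1.c_diff (hmem j) (hmem i)) ?_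
    intro l hl
    have hl0 := hl.1
    have hl2 := hl.2
    have hcomb := h1.c_convex.2 (hmem j) hmidmem
      (by linarith : (0:ℝ) ≤ 1 - 2*l) (by linarith : (0:ℝ) ≤ 2*l) (by ring)
    have hpt : ((1 - 2*l) • S j + (2*l) • mid) = fun x => S j x + l * (S i x - S j x) := by
      funext x
      simp only [Pi.add_apply, Pi.smul_apply, smul_eq_mul, hmid_def]
      ring
    rw [hpt] at hcomb
    simp only [smul_eq_mul] at hcomb
    rw [hγj0, div_le_iff₀ hl0]
    linarith
  -- pointwise sum of the two G-derivatives
  have hT : ∀ x, Gderiv u (S i) (fun x => (∑ k, S k x) - S i x) (fun y => S j y - S i y) x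
      + Gderiv u (S j) (fun x => (∑ k, S k x) - S j x) (fun y => S i y - S j y) x
      = if (∑ k, S k x) = 0 then 0 else
          (S j x - S i x)^2 * (u x (∑ k, S k x) - deriv (u x) (∑ k, S k x) * (∑ k, S k x))
            / (∑ k, S k x)^2 := by
    intro x
    have e1 : S i x + ((∑ k, S k x) - S i x) = ∑ k, S k x := by ring
    have e2 : S j x + ((∑ k, S k x) - S j x) = ∑ k, S k x := by ring
    simp only [Gderiv]
    rw [e1, e2]
    by_cases hx : (∑ k, S k x) = 0
    · simp [hx]
    · simp only [if_neg hx]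
      field_simp
      ring
  have hTnn : ∀ x, (0:ℝ) ≤ if (∑ k, S k x) = 0 then 0 else
      (S j x - S i x)^2 * (u x (∑ k, S k x) - deriv (u x) (∑ k, S k x) * (∑ k, S k x))
        / (∑ k, S k x)^2 := by
    intro x
    by_cases hx : (∑ k, S k x) = 0
    · simp [hx]
    · simp only [if_neg hx]
      have hpos : 0 < ∑ k, S k x := lt_of_le_of_ne (hsnn x) (Ne.symm hx)
      have hk := concaveDerivLeSlope (h1.u_concave x) (le_refl 0) hpos (hDu x hx)
      rw [h1.u_zero, sub_zero, sub_zero] at hk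
      have h2 := mul_le_mul_of_nonneg_right hk (le_of_lt hpos)
      rw [div_mul_cancel₀ _ (ne_of_gt hpos)] at h2
      apply div_nonneg (mul_nonneg (sq_nonneg _) (by linarith)) (sq_nonneg _)
  -- assemble inequalities
  have hsumT : (0:ℝ) ≤ ∑ x, (Gderiv u (S i) (fun x => (∑ k, S k x) - S i x)
        (fun y => S j y - S i y) x
      + Gderiv u (S j) (fun x => (∑ k, S k x) - S j x) (fun y => S i y - S j y) x) := by
    apply Finset.sum_nonneg
    intro x _
    rw [hT x]
    exact hTnn x
  rw [Finset.sum_add_distrib] at hsumT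
  have hmid_le : 2 * c mid ≤ c (S i) + c (S j) := by
    have hcomb := h1.c_convex.2 (hmem i) (hmem j)
      (by norm_num : (0:ℝ) ≤ 1/2) (by norm_num : (0:ℝ) ≤ 1/2) (by norm_num)
    have hpt : ((1/2 : ℝ) • S i + (1/2 : ℝ) • S j) = mid := by
      funext x
      simp only [Pi.add_apply, Pi.smul_apply, smul_eq_mul, hmid_def]
      ring
    rw [hpt] at hcomb
    simp only [smul_eq_mul] at hcomb
    linarith
  -- case analysis on the strictness assumption
  rcases h1.strict with ⟨x₀, hstr⟩ | hstrc
  · -- all u_x strictly concave except possibly x₀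
    have hdsum : ∑ x, (S j x - S i x) = 0 := by
      rw [Finset.sum_sub_distrib, hsum1, hsum1, sub_self]
    have hex : ∃ x, x ≠ x₀ ∧ S j x - S i x ≠ 0 := by
      by_contra hcon
      push_neg at hcon
      have hall : ∀ x, x ≠ x₀ → S j x - S i x = 0 := hcon
      have hx₀ : S j x₀ - S i x₀ = 0 := by
        have := Finset.sum_eq_single_of_mem x₀ (Finset.mem_univ x₀)
          (fun b _ hb => hall b hb) ▸ hdsum
        linarith [this]
      apply hne
      funext x
      by_cases hx : x = x₀
      · subst hx; linarith [hx₀]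
      · linarith [hall x hx]
    obtain ⟨x', hx'ne, hdx'⟩ := hex
    have hsx' : (∑ k, S k x') ≠ 0 := by
      intro h0
      apply hdx'
      rw [hs0 x' h0 i, hs0 x' h0 j]; ring
    have hpos : 0 < ∑ k, S k x' := lt_of_le_of_ne (hsnn x') (Ne.symm hsx')
    -- strict concavity gives strict slope inequality
    have hmidpt : u x' ((∑ k, S k x')/2) > (u x' (∑ k, S k x'))/2 := by
      have h := (hstr x' hx'ne).2 (Set.mem_Ici.2 (le_refl (0:ℝ)))
        (Set.mem_Ici.2 (le_of_lt hpos)) (Ne.symm (ne_of_gt hpos))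
        (by norm_num : (0:ℝ) < 1/2) (by norm_num : (0:ℝ) < 1/2) (by norm_num)
      simp only [smul_eq_mul, h1.u_zero x'] at h
      calc (u x' (∑ k, S k x'))/2 = 1/2 * 0 + 1/2 * u x' (∑ k, S k x') := by ring
        _ < u x' (1/2 * 0 + 1/2 * (∑ k, S k x')) := h
        _ = u x' ((∑ k, S k x')/2) := by congr 1; ring
    have hk := concaveDerivLeSlope (h1.u_concave x') (by positivity : (0:ℝ) ≤ (∑ k, S k x')/2)
      (by linarith) (hDu x' hsx')
    have h2 : (∑ k, S k x') - (∑ k, S k x')/2 = (∑ k, S k x')/2 := by ring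
    rw [h2] at hk
    have h4 : (u x' (∑ k, S k x') - u x' ((∑ k, S k x')/2)) / ((∑ k, S k x')/2)
        < u x' (∑ k, S k x') / (∑ k, S k x') := by
      rw [div_lt_div_iff₀ (by positivity) hpos]
      nlinarith [mul_lt_mul_of_pos_right hmidpt hpos]
    have h5 : deriv (u x') (∑ k, S k x') < u x' (∑ k, S k x') / (∑ k, S k x') :=
      lt_of_le_of_lt hk h4
    have hstrict : deriv (u x') (∑ k, S k x') * (∑ k, S k x') < u x' (∑ k, S k x') := by
      have := mul_lt_mul_of_pos_right h5 hpos
      rwa [div_mul_cancel₀ _ (ne_of_gt hpos)] at this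
    have hTpos : (0:ℝ) < (if (∑ k, S k x') = 0 then 0 else
        (S j x' - S i x')^2 * (u x' (∑ k, S k x') - deriv (u x') (∑ k, S k x') * (∑ k, S k x'))
          / (∑ k, S k x')^2) := by
      rw [if_neg hsx']
      have hd2 : (0:ℝ) < (S j x' - S i x')^2 :=
        lt_of_le_of_ne (sq_nonneg _) (Ne.symm (pow_ne_zero 2 hdx'))
      exact div_pos (mul_pos hd2 (by linarith)) (by positivity)
    have hsum_eq : ∑ x, (Gderiv u (S i) (fun x => (∑ k, S k x) - S i x)
          (fun y => S j y - S i y) x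
        + Gderiv u (S j) (fun x => (∑ k, S k x) - S j x) (fun y => S i y - S j y) x)
        = ∑ x, (if (∑ k, S k x) = 0 then 0 else
          (S j x - S i x)^2 * (u x (∑ k, S k x) - deriv (u x) (∑ k, S k x) * (∑ k, S k x))
            / (∑ k, S k x)^2) := Finset.sum_congr rfl fun x _ => hT x
    have hsingle : (if (∑ k, S k x') = 0 then 0 else
        (S j x' - S i x')^2 * (u x' (∑ k, S k x') - deriv (u x') (∑ k, S k x') * (∑ k, S k x'))
          / (∑ k, S k x')^2)
        ≤ ∑ x, (if (∑ k, S k x) = 0 then 0 else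
          (S j x - S i x)^2 * (u x (∑ k, S k x) - deriv (u x) (∑ k, S k x) * (∑ k, S k x))
            / (∑ k, S k x)^2) :=
      Finset.single_le_sum (fun x _ => hTnn x) (Finset.mem_univ x')
    rw [Finset.sum_add_distrib] at hsum_eq
    linarith
  · -- c strictly convex
    have hmid_lt : 2 * c mid < c (S i) + c (S j) := by
      have hcomb := hstrc.2 (hmem i) (hmem j) hne
        (by norm_num : (0:ℝ) < 1/2) (by norm_num : (0:ℝ) < 1/2) (by norm_num)
      have hpt : ((1/2 : ℝ) • S i + (1/2 : ℝ) • S j) = mid := by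
        funext x
        simp only [Pi.add_apply, Pi.smul_apply, smul_eq_mul, hmid_def]
        ring
      rw [hpt] at hcomb
      simp only [smul_eq_mul] at hcomb
      linarith
    linarith
end

section
/- Under Assumptions 1 and 2, let S ∈ Δ^n be a profile whose aggregate s = Σ_i s_i has all coordinates positive, and let g_{ix} = p_x(s_x) + p_x'(s_x)·s_{ix} − (A s_i)_x. Then Σ_i Σ_x (s_{ix} − s_x/n)·( g_{ix} − (1/m)·Σ_y g_{iy} ) = Σ_x p_x'(s_x)·(Σ_i s_{ix}² − s_x²/n) − Σ_i (s_i − s/n)ᵀ A (s_i − s/n) ≤ 0. Equality holds whenever s_i = s/n for all i; and if A is positive definite, equality holds only if s_i = s/n for all i. -/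
open Set Finset

/-- Under Assumptions 1 and 2 (quadratic cost `c(v) = ½ vᵀAv`
with `A` symmetric positive semidefinite), for a profile `S` whose aggregate
`s` has all coordinates positive and marginal payoffs
`g_{ix} = p_x(s_x) + p_x'(s_x)·s_{ix} − (A s_i)_x`, one has
`Σ_i Σ_x (s_{ix} − s_x/n)(g_{ix} − (1/m)Σ_y g_{iy})
  = Σ_x p_x'(s_x)(Σ_i s_{ix}² − s_x²/n) − Σ_i (s_i − s/n)ᵀA(s_i − s/n) ≤ 0`,
with equality whenever `s_i = s/n` for all `i`, and—if `A` is positive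
definite—only if `s_i = s/n` for all `i`. -/
theorem regularizer_derivative_nonpos (n m : ℕ) (hn : 2 ≤ n) (hm : 2 ≤ m)
    (u u' p' : Fin m → ℝ → ℝ)
    (A : Matrix (Fin m) (Fin m) ℝ) (hA : A.PosSemidef)
    (c : (Fin m → ℝ) → ℝ)
    (hc : ∀ v, c v = (1/2) * dotProduct v (A.mulVec v))
    (h1 : Assumption1 u c)
    (hu' : ∀ x, ∀ t : ℝ, 0 < t → HasDerivAt (u x) (u' x t) t)
    (hu'cont : ∀ x, ContinuousOn (u' x) (Ioi (0:ℝ)))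
    (hp' : ∀ x, ∀ t : ℝ, 0 < t → HasDerivAt (fun r => u x r / r) (p' x t) t)
    (S : Fin n → Fin m → ℝ) (hS : ∀ i, S i ∈ stdSimplex ℝ (Fin m))
    (s : Fin m → ℝ) (hs : ∀ x, s x = ∑ i, S i x) (hspos : ∀ x, 0 < s x)
    (g : Fin n → Fin m → ℝ)
    (hg : ∀ i x, g i x = u x (s x) / s x + p' x (s x) * S i x - A.mulVec (S i) x) :
    (∑ i, ∑ x, (S i x - s x / n) * (g i x - (∑ y, g i y) / m) =
        ∑ x, p' x (s x) * ((∑ i, (S i x) ^ 2) - (s x) ^ 2 / n)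
          - ∑ i, dotProduct (fun y => S i y - s y / n)
              (A.mulVec (fun y => S i y - s y / n))) ∧
    (∑ i, ∑ x, (S i x - s x / n) * (g i x - (∑ y, g i y) / m) ≤ 0) ∧
    ((∀ i, S i = fun x => s x / n) →
      ∑ i, ∑ x, (S i x - s x / n) * (g i x - (∑ y, g i y) / m) = 0) ∧
    (A.PosDef →
      ∑ i, ∑ x, (S i x - s x / n) * (g i x - (∑ y, g i y) / m) = 0 →
      ∀ i, S i = fun x => s x / n) := by
  have hn0 : (0:ℝ) < (n:ℝ) := by
    have : 0 < n := lt_of_lt_of_le (by norm_num) hn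
    exact_mod_cast this
  have hnne : (n:ℝ) ≠ 0 := ne_of_gt hn0
  have hsum1 : ∀ i, ∑ x, S i x = 1 := fun i => (hS i).2
  -- sum over players of deviations is zero (pointwise in x)
  have hdi0 : ∀ x, ∑ i, (S i x - s x / n) = 0 := by
    intro x
    rw [Finset.sum_sub_distrib, ← hs x, Finset.sum_const, Finset.card_univ,
      Fintype.card_fin, nsmul_eq_mul]
    field_simp
    ring
  -- total mass of the aggregate
  have hstot : ∑ x, s x = n := by
    simp only [hs]
    rw [Finset.sum_comm]
    simp [hsum1]
  -- sum over markets of deviations is zero (for each i)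
  have hdx0 : ∀ i, ∑ x, (S i x - s x / n) = 0 := by
    intro i
    rw [Finset.sum_sub_distrib, hsum1, ← Finset.sum_div, hstot]
    field_simp
    ring
  -- p' is nonpositive at s x
  have hanti : ∀ x, ∀ a b : ℝ, 0 < a → a ≤ b → u x b / b ≤ u x a / a := by
    intro x a b ha hab
    have hb : 0 < a := ha
    have hbpos : 0 < b := lt_of_lt_of_le ha hab
    have hw1 : (0:ℝ) ≤ a / b := le_of_lt (div_pos ha hbpos)
    have hw2 : (0:ℝ) ≤ 1 - a / b := by
      have : a / b ≤ 1 := (div_le_one hbpos).2 hab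
      linarith
    have key := (h1.u_concave x).2 (mem_Ici.2 (le_of_lt hbpos)) (mem_Ici.2 (le_refl (0:ℝ)))
      hw1 hw2 (by ring)
    have hba : (a / b) • b + (1 - a / b) • (0:ℝ) = a := by
      rw [smul_eq_mul, smul_eq_mul, mul_zero, add_zero]
      exact div_mul_cancel₀ a (ne_of_gt hbpos)
    rw [hba, h1.u_zero x] at key
    have key2 : (a / b) * u x b ≤ u x a := by
      simpa [smul_eq_mul] using key
    rw [div_le_div_iff₀ hbpos ha]
    calc u x b * a = ((a / b) * u x b) * b := by field_simp
      _ ≤ u x a * b := by nlinarith [le_of_lt hbpos]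
  have hp'le : ∀ x, p' x (s x) ≤ 0 := by
    intro x
    have ht := hspos x
    have hd := (hasDerivAt_iff_tendsto_slope.mp (hp' x (s x) ht))
    have h2 : Filter.Tendsto (slope (fun r => u x r / r) (s x)) (nhdsWithin (s x) (Ioi (s x)))
        (nhds (p' x (s x))) :=
      hd.mono_left (nhdsWithin_mono _ (fun y hy => ne_of_gt hy))
    refine le_of_tendsto h2 ?_
    filter_upwards [self_mem_nhdsWithin] with y hy
    have hy' : s x < y := hy
    have hle : u x y / y ≤ u x (s x) / (s x) := hanti x (s x) y ht (le_of_lt hy')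
    rw [slope_def_field]
    apply div_nonpos_of_nonpos_of_nonneg
    · linarith
    · linarith
  -- variance-type nonnegativity
  have hvar : ∀ x, 0 ≤ (∑ i, (S i x) ^ 2) - (s x) ^ 2 / n := by
    intro x
    rw [sub_nonneg, div_le_iff₀ hn0, hs x]
    have hCS := sq_sum_le_card_mul_sum_sq (s := (Finset.univ : Finset (Fin n)))
      (f := fun i => S i x)
    rw [Finset.card_univ, Fintype.card_fin] at hCS
    calc (∑ i, S i x) ^ 2 ≤ (n:ℝ) * ∑ i, (S i x) ^ 2 := hCS
      _ = (∑ i, (S i x) ^ 2) * n := by ring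
  -- the main algebraic identity
  have heq : ∑ i, ∑ x, (S i x - s x / n) * (g i x - (∑ y, g i y) / m) =
      ∑ x, p' x (s x) * ((∑ i, (S i x) ^ 2) - (s x) ^ 2 / n)
        - ∑ i, dotProduct (fun y => S i y - s y / n)
            (A.mulVec (fun y => S i y - s y / n)) := by
    have stepA : ∀ i, ∑ x, (S i x - s x / n) * (g i x - (∑ y, g i y) / m)
        = ∑ x, (S i x - s x / n) * g i x := by
      intro i
      have h' : ∑ x, (S i x - s x / n) * ((∑ y, g i y) / m)
          = (∑ x, (S i x - s x / n)) * ((∑ y, g i y) / m) := (Finset.sum_mul _ _ _).symm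
      simp only [mul_sub]
      rw [Finset.sum_sub_distrib, h', hdx0 i, zero_mul, sub_zero]
    have hmv : ∀ i, A.mulVec (S i)
        = A.mulVec (fun y => S i y - s y / n) + A.mulVec (fun y => s y / n) := by
      intro i
      have hfe : (fun y => S i y - s y / n) + (fun y => s y / n) = S i := by
        funext y
        show S i y - s y / n + s y / n = S i y
        ring
      rw [← Matrix.mulVec_add, hfe]
    have expand : ∀ i, ∑ x, (S i x - s x / n) * g i x
        = (∑ x, (S i x - s x / n) * (u x (s x) / s x))
          + (∑ x, p' x (s x) * ((S i x - s x / n) * S i x))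
          - (dotProduct (fun y => S i y - s y / n)
              (A.mulVec (fun y => S i y - s y / n))
            + dotProduct (fun y => S i y - s y / n)
              (A.mulVec (fun y => s y / n))) := by
      intro i
      rw [← dotProduct_add]
      rw [show A.mulVec (fun y => S i y - s y / n) + A.mulVec (fun y => s y / n)
          = A.mulVec (S i) from (hmv i).symm]
      unfold dotProduct
      rw [← Finset.sum_add_distrib, ← Finset.sum_sub_distrib]
      refine Finset.sum_congr rfl fun x _ => ?_
      rw [hg i x]
      ring
    calc ∑ i, ∑ x, (S i x - s x / n) * (g i x - (∑ y, g i y) / m)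
        = ∑ i, ((∑ x, (S i x - s x / n) * (u x (s x) / s x))
            + (∑ x, p' x (s x) * ((S i x - s x / n) * S i x))
            - (dotProduct (fun y => S i y - s y / n)
                (A.mulVec (fun y => S i y - s y / n))
              + dotProduct (fun y => S i y - s y / n)
                (A.mulVec (fun y => s y / n)))) := by
          refine Finset.sum_congr rfl fun i _ => ?_
          rw [stepA i, expand i]
      _ = (∑ i, ∑ x, (S i x - s x / n) * (u x (s x) / s x))
            + (∑ i, ∑ x, p' x (s x) * ((S i x - s x / n) * S i x))
            - ((∑ i, dotProduct (fun y => S i y - s y / n)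
                (A.mulVec (fun y => S i y - s y / n)))
              + ∑ i, dotProduct (fun y => S i y - s y / n)
                (A.mulVec (fun y => s y / n))) := by
          rw [Finset.sum_sub_distrib, Finset.sum_add_distrib, Finset.sum_add_distrib]
      _ = ∑ x, p' x (s x) * ((∑ i, (S i x) ^ 2) - (s x) ^ 2 / n)
            - ∑ i, dotProduct (fun y => S i y - s y / n)
                (A.mulVec (fun y => S i y - s y / n)) := by
          have hT1 : ∑ i, ∑ x, (S i x - s x / n) * (u x (s x) / s x) = 0 := by
            rw [Finset.sum_comm]
            refine Finset.sum_eq_zero fun x _ => ?_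
            rw [← Finset.sum_mul, hdi0 x, zero_mul]
          have hT2 : ∑ i, ∑ x, p' x (s x) * ((S i x - s x / n) * S i x)
              = ∑ x, p' x (s x) * ((∑ i, (S i x) ^ 2) - (s x) ^ 2 / n) := by
            rw [Finset.sum_comm]
            refine Finset.sum_congr rfl fun x _ => ?_
            rw [← Finset.mul_sum]
            congr 1
            have : ∀ i : Fin n, (S i x - s x / n) * S i x
                = (S i x) ^ 2 - (s x / n) * S i x := fun i => by ring
            rw [Finset.sum_congr rfl (fun i _ => this i), Finset.sum_sub_distrib,
              ← Finset.mul_sum, ← hs x]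
            congr 1
            field_simp
          have hT3 : ∑ i, dotProduct (fun y => S i y - s y / n)
              (A.mulVec (fun y => s y / n)) = 0 := by
            unfold dotProduct
            rw [Finset.sum_comm]
            refine Finset.sum_eq_zero fun y _ => ?_
            rw [← Finset.sum_mul, hdi0 y, zero_mul]
          rw [hT1, hT2, hT3, zero_add, add_zero]
  -- nonpositivity of the first piece and nonnegativity of the quadratic piece
  have hTle : ∑ x, p' x (s x) * ((∑ i, (S i x) ^ 2) - (s x) ^ 2 / n) ≤ 0 :=
    Finset.sum_nonpos fun x _ =>
      mul_nonpos_iff.mpr (Or.inr ⟨hp'le x, hvar x⟩)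
  have hQnn : ∀ i, 0 ≤ dotProduct (fun y => S i y - s y / n)
      (A.mulVec (fun y => S i y - s y / n)) := by
    intro i
    have := hA.dotProduct_mulVec_nonneg (fun y => S i y - s y / n)
    simpa using this
  have hQsum : 0 ≤ ∑ i, dotProduct (fun y => S i y - s y / n)
      (A.mulVec (fun y => S i y - s y / n)) :=
    Finset.sum_nonneg fun i _ => hQnn i
  refine ⟨heq, ?_, ?_, ?_⟩
  · rw [heq]; linarith
  · intro h
    refine Finset.sum_eq_zero fun i _ => Finset.sum_eq_zero fun x _ => ?_
    have : S i x = s x / n := congrFun (h i) x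
    rw [this, sub_self, zero_mul]
  · intro hpd hzero
    rw [heq] at hzero
    have hQ0 : ∑ i, dotProduct (fun y => S i y - s y / n)
        (A.mulVec (fun y => S i y - s y / n)) = 0 := by linarith
    have hall : ∀ i ∈ Finset.univ, dotProduct (fun y => S i y - s y / n)
        (A.mulVec (fun y => S i y - s y / n)) = 0 :=
      (Finset.sum_eq_zero_iff_of_nonneg (fun i _ => hQnn i)).mp hQ0
    intro i
    by_contra hne
    have hdne : (fun y => S i y - s y / n) ≠ (0 : Fin m → ℝ) := by
      intro h0
      apply hne
      funext x
      have := congrFun h0 x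
      simp only [Pi.zero_apply] at this
      linarith
    have := hpd.dotProduct_mulVec_pos (x := fun y => S i y - s y / n) hdne
    rw [show (star (fun y => S i y - s y / n) : Fin m → ℝ)
        = (fun y => S i y - s y / n) from by funext y; simp] at this
    have := hall i (Finset.mem_univ i)
    linarith
end

section
/- Consider the game G with production functions u_x(t) = a_x·t^p, where a_1, …, a_m > 0 and p ∈ (0,1), and zero cost c ≡ 0. Let w ∈ Δ be defined by w_x = a_x^{1/(1−p)} / Σ_y a_y^{1/(1−p)}. Then the symmetric profile S* = (w, …, w) is a pure-strategy Nash equilibrium of G, and its aggregate strategy s* = n·w maximizes the total income Σ_i u_i(S) = Σ_x a_x·s_x^p over all profiles S ∈ Δ^n (where s = Σ_i s_i); that is, the Nash equilibrium is socially optimal. -/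
open Set Finset

/-- Tangent-line inequality for the concave function `t ↦ t ^ p`, `p ∈ (0,1)`. -/
lemma rpow_tangent {p s w : ℝ} (hp0 : 0 < p) (hp1 : p < 1) (hs : 0 ≤ s) (hw : 0 < w) :
    s ^ p ≤ w ^ p + p * w ^ (p - 1) * (s - w) := by
  have hx : -1 ≤ s / w - 1 := by
    have : 0 ≤ s / w := div_nonneg hs hw.le
    linarith
  have hber := rpow_one_add_le_one_add_mul_self hx hp0.le hp1.le
  have h1 : (1 + (s / w - 1)) = s / w := by ring
  rw [h1] at hber
  have h2 : (s / w) ^ p = s ^ p / w ^ p := Real.div_rpow hs hw.le p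
  rw [h2] at hber
  have hwp : 0 < w ^ p := Real.rpow_pos_of_pos hw p
  have h3 : s ^ p ≤ w ^ p * (1 + p * (s / w - 1)) := by
    rw [div_le_iff₀ hwp] at hber
    linarith [hber]
  have h4 : w ^ p * (1 + p * (s / w - 1)) = w ^ p + p * w ^ (p - 1) * (s - w) := by
    have h5 : w ^ (p - 1) = w ^ p / w := by
      rw [Real.rpow_sub hw, Real.rpow_one]
    rw [h5]
    field_simp
  linarith [h4 ▸ h3]

/-- Key per-coordinate inequality for the Nash part. -/
lemma keyIneq {p t W N : ℝ} (hp0 : 0 < p) (hp1 : p < 1) (ht : 0 ≤ t) (hW : 0 < W)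
    (hN : 2 ≤ N) :
    W ^ (1 - p) * (t + (N - 1) * W) ^ (p - 1) * t ≤
      N ^ (p - 2) * ((N - 1 + p) * t + (1 - p) * W) := by
  have hN0 : (0:ℝ) < N := by linarith
  have hC : 0 < N ^ (p - 2) := Real.rpow_pos_of_pos hN0 _
  rcases eq_or_lt_of_le ht with h0 | htpos
  · rw [← h0]
    have : (0:ℝ) ≤ N ^ (p - 2) * ((N - 1 + p) * 0 + (1 - p) * W) := by
      apply mul_nonneg hC.le
      nlinarith
    simpa using this
  have hu : 0 < t + (N - 1) * W := by nlinarith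
  set u : ℝ := t + (N - 1) * W with hudef
  have hNW : 0 < N * W := by positivity
  have htan := rpow_tangent hp0 hp1 hu.le hNW
  -- rewrite LHS
  have hup : u ^ (p - 1) = u ^ p / u := by rw [Real.rpow_sub hu, Real.rpow_one]
  have hW1p : 0 < W ^ (1 - p) := Real.rpow_pos_of_pos hW _
  have hfac : (0:ℝ) ≤ W ^ (1 - p) * t / u := by positivity
  have h2 : W ^ (1 - p) * u ^ (p - 1) * t =
      (W ^ (1 - p) * t / u) * u ^ p := by
    rw [hup]; field_simp
  have h3 : (W ^ (1 - p) * t / u) * u ^ p ≤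
      (W ^ (1 - p) * t / u) * ((N * W) ^ p + p * (N * W) ^ (p - 1) * (u - N * W)) :=
    mul_le_mul_of_nonneg_left htan hfac
  -- simplify the rpow products
  have e1 : W ^ (1 - p) * (N * W) ^ p = N ^ (p - 2) * N * N * W := by
    rw [Real.mul_rpow hN0.le hW.le]
    have : W ^ (1 - p) * W ^ p = W := by
      rw [← Real.rpow_add hW]; norm_num
    have e3 : N ^ p = N ^ (p - 2) * N * N := by
      rw [show p = (p - 2) + 1 + 1 by ring, Real.rpow_add hN0, Real.rpow_add hN0,
        Real.rpow_one]
      ring_nf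
    linear_combination N ^ p * this + W * e3
  have e2 : W ^ (1 - p) * (N * W) ^ (p - 1) = N ^ (p - 2) * N := by
    rw [Real.mul_rpow hN0.le hW.le]
    have hWW : W ^ (1 - p) * W ^ (p - 1) = 1 := by
      rw [← Real.rpow_add hW]; norm_num
    have e5 : N ^ (p - 1) = N ^ (p - 2) * N := by
      rw [show p - 1 = (p - 2) + 1 by ring, Real.rpow_add hN0, Real.rpow_one]
    linear_combination N ^ (p - 1) * hWW + e5
  have h4 : (W ^ (1 - p) * t / u) * ((N * W) ^ p + p * (N * W) ^ (p - 1) * (u - N * W)) =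
      (t / u) * (N ^ (p - 2) * (N * N * W + p * N * (u - N * W))) := by
    have expand : (W ^ (1 - p) * t / u) * ((N * W) ^ p + p * (N * W) ^ (p - 1) * (u - N * W)) =
        (t / u) * ((W ^ (1 - p) * (N * W) ^ p) +
          p * (W ^ (1 - p) * (N * W) ^ (p - 1)) * (u - N * W)) := by
      field_simp
    rw [expand, e1, e2]; ring
  have h5 : (t / u) * (N ^ (p - 2) * (N * N * W + p * N * (u - N * W))) ≤
      N ^ (p - 2) * ((N - 1 + p) * t + (1 - p) * W) := by
    rw [div_mul_eq_mul_div, div_le_iff₀ hu]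
    have key : N ^ (p - 2) * ((N - 1 + p) * t + (1 - p) * W) * u -
        t * (N ^ (p - 2) * (N * N * W + p * N * (u - N * W))) =
        N ^ (p - 2) * ((1 - p) * (N - 1) * (t - W) ^ 2) := by
      rw [hudef]; ring
    nlinarith [mul_nonneg hC.le (mul_nonneg (mul_nonneg (by linarith : (0:ℝ) ≤ 1 - p)
      (by linarith : (0:ℝ) ≤ N - 1)) (sq_nonneg (t - W)))]
  calc W ^ (1 - p) * u ^ (p - 1) * t = (W ^ (1 - p) * t / u) * u ^ p := h2
    _ ≤ _ := h3
    _ = _ := h4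
    _ ≤ _ := h5

/-- Payoff in the power-production game with zero cost: a player with strategy
`v` facing opponent aggregate `w` receives `Σ_x a_x·(v_x + w_x)^{p−1}·v_x`
(real powers; the term is `0` when `v_x + w_x = 0` since `0^{p−1} = 0`). -/
noncomputable def payPow {m : ℕ} (a : Fin m → ℝ) (p : ℝ)
    (w v : Fin m → ℝ) : ℝ :=
  ∑ x, a x * (v x + w x) ^ (p - 1) * v x

/-- In the game with production functions `u_x(t) = a_x t^p`
(`a_x > 0`, `p ∈ (0,1)`) and zero cost, the symmetric profile where every
player plays `w`, `w_x = a_x^{1/(1−p)} / Σ_y a_y^{1/(1−p)}`, is a pure-strategy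
Nash equilibrium, and its aggregate `n·w` maximizes the total income
`Σ_x a_x·s_x^p` over all profiles in `Δ^n`: the Nash equilibrium is socially
optimal. -/
theorem power_game_NE_socially_optimal (n m : ℕ) (hn : 2 ≤ n) (hm : 2 ≤ m)
    (a : Fin m → ℝ) (ha : ∀ x, 0 < a x)
    (p : ℝ) (hp : p ∈ Ioo (0:ℝ) 1)
    (w : Fin m → ℝ)
    (hw : ∀ x, w x = a x ^ (1/(1-p)) / ∑ y, a y ^ (1/(1-p))) :
    (w ∈ stdSimplex ℝ (Fin m) ∧
      ∀ _i : Fin n, ∀ v ∈ stdSimplex ℝ (Fin m),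
        payPow a p (fun x => (∑ _j : Fin n, w x) - w x) v ≤
          payPow a p (fun x => (∑ _j : Fin n, w x) - w x) w) ∧
    ∀ S : Fin n → Fin m → ℝ, (∀ i, S i ∈ stdSimplex ℝ (Fin m)) →
      ∑ x, a x * (∑ i, S i x) ^ p ≤ ∑ x, a x * ((n : ℝ) * w x) ^ p := by
  obtain ⟨hp0, hp1⟩ := hp
  have h1p : (0:ℝ) < 1 - p := by linarith
  haveI : NeZero m := ⟨by omega⟩
  set A : ℝ := ∑ y, a y ^ (1/(1-p)) with hA
  have hApos : 0 < A := Finset.sum_pos (fun y _ => Real.rpow_pos_of_pos (ha y) _)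
    Finset.univ_nonempty
  have hwpos : ∀ x, 0 < w x := fun x => by
    rw [hw x]; exact div_pos (Real.rpow_pos_of_pos (ha x) _) hApos
  have hwsum : ∑ x, w x = 1 := by
    simp_rw [hw]
    rw [← Finset.sum_div, div_self hApos.ne']
  have hconst : ∀ x, a x * w x ^ (p - 1) = A ^ (1 - p) := by
    intro x
    rw [hw x, Real.div_rpow (Real.rpow_pos_of_pos (ha x) _).le hApos.le,
      ← Real.rpow_mul (ha x).le]
    have hq : 1/(1-p) * (p - 1) = -1 := by field_simp; ring
    rw [hq, Real.rpow_neg_one]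
    have hAp : (0:ℝ) < A ^ (p - 1) := Real.rpow_pos_of_pos hApos _
    have h7 : a x * ((a x)⁻¹ / A ^ (p - 1)) = (A ^ (p - 1))⁻¹ := by
      field_simp
      exact div_self (ha x).ne'
    rw [h7, show (1:ℝ) - p = -(p - 1) by ring, Real.rpow_neg hApos.le]
  have hawpow : ∀ x, a x = A ^ (1 - p) * w x ^ (1 - p) := by
    intro x
    have h1 : w x ^ (p - 1) * w x ^ (1 - p) = 1 := by
      rw [← Real.rpow_add (hwpos x)]; norm_num
    have := hconst x
    linear_combination w x ^ (1 - p) * this - a x * h1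
  have hN2 : (2:ℝ) ≤ (n:ℝ) := by exact_mod_cast hn
  have hNpos : (0:ℝ) < (n:ℝ) := by linarith
  have hsumconst : ∀ x, (∑ _j : Fin n, w x) = (n:ℝ) * w x := by
    intro x; rw [Finset.sum_const]; simp [nsmul_eq_mul]
  refine ⟨⟨⟨fun x => (hwpos x).le, hwsum⟩, ?_⟩, ?_⟩
  · -- Nash equilibrium
    intro _i v hv
    obtain ⟨hv0, hv1⟩ := hv
    unfold payPow
    have hL : ∀ x, a x * (v x + ((∑ _j : Fin n, w x) - w x)) ^ (p - 1) * v x ≤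
        A ^ (1 - p) * ((n:ℝ) ^ (p - 2) * (((n:ℝ) - 1 + p) * v x + (1 - p) * w x)) := by
      intro x
      rw [hsumconst x, hawpow x]
      have harg : v x + ((n:ℝ) * w x - w x) = v x + ((n:ℝ) - 1) * w x := by ring
      rw [harg]
      have hk := keyIneq hp0 hp1 (hv0 x) (hwpos x) hN2 (t := v x) (W := w x) (N := (n:ℝ))
      have hApow : (0:ℝ) ≤ A ^ (1 - p) := (Real.rpow_pos_of_pos hApos _).le
      calc A ^ (1 - p) * w x ^ (1 - p) * (v x + ((n:ℝ) - 1) * w x) ^ (p - 1) * v x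
          = A ^ (1 - p) * (w x ^ (1 - p) * (v x + ((n:ℝ) - 1) * w x) ^ (p - 1) * v x) := by
            ring
        _ ≤ A ^ (1 - p) * ((n:ℝ) ^ (p - 2) * (((n:ℝ) - 1 + p) * v x + (1 - p) * w x)) :=
            mul_le_mul_of_nonneg_left hk hApow
    have hR : ∀ x, a x * (w x + ((∑ _j : Fin n, w x) - w x)) ^ (p - 1) * w x =
        A ^ (1 - p) * ((n:ℝ) ^ (p - 1) * w x) := by
      intro x
      rw [hsumconst x]
      have harg : w x + ((n:ℝ) * w x - w x) = (n:ℝ) * w x := by ring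
      rw [harg, Real.mul_rpow hNpos.le (hwpos x).le]
      have := hconst x
      linear_combination ((n:ℝ) ^ (p - 1) * w x) * this
    calc ∑ x, a x * (v x + ((∑ _j : Fin n, w x) - w x)) ^ (p - 1) * v x
        ≤ ∑ x, A ^ (1 - p) * ((n:ℝ) ^ (p - 2) * (((n:ℝ) - 1 + p) * v x + (1 - p) * w x)) :=
          Finset.sum_le_sum (fun x _ => hL x)
      _ = A ^ (1 - p) * ((n:ℝ) ^ (p - 2) * (n:ℝ)) := by
          rw [← Finset.mul_sum]
          congr 1
          rw [← Finset.mul_sum]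
          congr 1
          rw [Finset.sum_add_distrib, ← Finset.mul_sum, ← Finset.mul_sum, hv1, hwsum]
          ring
      _ = ∑ x, a x * (w x + ((∑ _j : Fin n, w x) - w x)) ^ (p - 1) * w x := by
          simp_rw [hR]
          rw [← Finset.mul_sum, ← Finset.mul_sum, hwsum]
          have : (n:ℝ) ^ (p - 2) * (n:ℝ) = (n:ℝ) ^ (p - 1) := by
            rw [show p - 1 = (p - 2) + 1 by ring, Real.rpow_add hNpos, Real.rpow_one]
          rw [this]; ring
  · -- social optimality
    intro S hS
    set s : Fin m → ℝ := fun x => ∑ i, S i x with hs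
    have hs0 : ∀ x, 0 ≤ s x := fun x =>
      Finset.sum_nonneg (fun i _ => (hS i).1 x)
    have hssum : ∑ x, s x = (n:ℝ) := by
      rw [Finset.sum_comm]
      have : ∀ i : Fin n, ∑ x, S i x = 1 := fun i => (hS i).2
      simp [this]
    have hterm : ∀ x, a x * s x ^ p ≤
        a x * ((n:ℝ) * w x) ^ p + p * (n:ℝ) ^ (p - 1) * A ^ (1 - p) * (s x - (n:ℝ) * w x) := by
      intro x
      have hnw : 0 < (n:ℝ) * w x := mul_pos hNpos (hwpos x)
      have htan := rpow_tangent hp0 hp1 (hs0 x) hnw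
      have h6 : a x * (((n:ℝ) * w x) ^ p + p * ((n:ℝ) * w x) ^ (p - 1) * (s x - (n:ℝ) * w x)) =
          a x * ((n:ℝ) * w x) ^ p + p * (n:ℝ) ^ (p - 1) * A ^ (1 - p) * (s x - (n:ℝ) * w x) := by
        rw [Real.mul_rpow hNpos.le (hwpos x).le, Real.mul_rpow hNpos.le (hwpos x).le]
        have := hconst x
        linear_combination (p * (n:ℝ) ^ (p - 1) * (s x - (n:ℝ) * w x)) * this
      nlinarith [mul_le_mul_of_nonneg_left htan (ha x).le, h6]
    calc ∑ x, a x * s x ^ p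
        ≤ ∑ x, (a x * ((n:ℝ) * w x) ^ p
            + p * (n:ℝ) ^ (p - 1) * A ^ (1 - p) * (s x - (n:ℝ) * w x)) :=
          Finset.sum_le_sum (fun x _ => hterm x)
      _ = (∑ x, a x * ((n:ℝ) * w x) ^ p)
            + p * (n:ℝ) ^ (p - 1) * A ^ (1 - p) * ((∑ x, s x) - (n:ℝ) * ∑ x, w x) := by
          rw [Finset.sum_add_distrib, ← Finset.mul_sum]
          congr 1
          rw [Finset.sum_sub_distrib, ← Finset.mul_sum]
      _ = ∑ x, a x * ((n:ℝ) * w x) ^ p := by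
          rw [hssum, hwsum]; ring
end
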